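/- arXiv:2409.08436 — 5 statements merged into one kernel-verified Lean document; each statement's English description precedes it below -/
import Mathlib

section
/- For any orthonormal basis {|j⟩}_{j=1}^{2^N} of (ℂ²)^{⊗N}, the average over all 6^N states |ψ⟩ ∈ S of Σ_{j=1}^{2^N} |⟨j|ψ⟩|⁴ is at most (2/3)^N. Equivalently, E_{|ψ⟩∼𝓔} 1/D^eff_ψ ≤ (2/3)^N, where 𝓔 is the uniform distribution over S and the effective dimension is defined with respect to the given basis. -/
open scoped Matrix ComplexConjugate

/-- The six single-qubit states `|x^±⟩, |y^±⟩, |z^±⟩`: unit eigenvectors of the Pauli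
matrices `σˣ, σʸ, σᶻ` with eigenvalues `±1`. -/
noncomputable def qs : Fin 6 → Fin 2 → ℂ
  | 0 => ![(Real.sqrt 2 : ℂ)⁻¹, (Real.sqrt 2 : ℂ)⁻¹]
  | 1 => ![(Real.sqrt 2 : ℂ)⁻¹, -(Real.sqrt 2 : ℂ)⁻¹]
  | 2 => ![(Real.sqrt 2 : ℂ)⁻¹, Complex.I * (Real.sqrt 2 : ℂ)⁻¹]
  | 3 => ![(Real.sqrt 2 : ℂ)⁻¹, -(Complex.I * (Real.sqrt 2 : ℂ)⁻¹)]
  | 4 => ![1, 0]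
  | 5 => ![0, 1]

/-- The product state `⊗_i |f i⟩ ∈ (ℂ²)^{⊗N}`; as `f` ranges over `Fin N → Fin 6`,
these are exactly the `6^N` elements of `S`. -/
noncomputable def prodState {N : ℕ} (f : Fin N → Fin 6) : (Fin N → Fin 2) → ℂ :=
  fun x => ∏ i, qs (f i) (x i)

/-- Complex Kronecker delta on `Fin 2`. -/
def dd (a c : Fin 2) : ℂ := if a = c then 1 else 0

lemma dd_comm (a c : Fin 2) : dd a c = dd c a := by
  unfold dd
  by_cases h : a = c <;> simp [h, Ne.symm, eq_comm]

/-- Merge two configurations along a subset. -/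
def merge {N : ℕ} (t : Finset (Fin N)) (u v : Fin N → Fin 2) : Fin N → Fin 2 :=
  fun i => if i ∈ t then u i else v i

/-- The 2-design property of the six states: second moment. -/
lemma site_moment (a b c d : Fin 2) :
    ∑ s : Fin 6, qs s a * qs s b * conj (qs s c) * conj (qs s d)
      = dd a c * dd b d + dd a d * dd b c := by
  have h0 : (0:ℝ) ≤ 2 := by norm_num
  have hr4 : (((Real.sqrt 2 : ℝ) : ℂ))⁻¹ ^ 4 = 4⁻¹ := by
    have h2 : (((Real.sqrt 2 : ℝ) : ℂ)) ^ 2 = 2 := by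
      rw [← Complex.ofReal_pow, Real.sq_sqrt h0]; norm_num
    rw [inv_pow, show (4:ℕ) = 2*2 from rfl, pow_mul, h2]
    norm_num
  fin_cases a <;> fin_cases b <;> fin_cases c <;> fin_cases d <;>
    simp [qs, dd, Fin.sum_univ_six, Complex.conj_I, Complex.conj_ofReal, map_inv₀] <;>
    ring_nf <;>
    simp [hr4, Complex.I_sq] <;> ring_nf <;> simp [hr4]

/-- Factorization of the fourth moment over sites. -/
lemma moment_prod {N : ℕ} (x1 x2 y1 y2 : Fin N → Fin 2) :
    ∑ f : Fin N → Fin 6,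
        prodState f x1 * prodState f x2 * conj (prodState f y1) * conj (prodState f y2)
      = ∏ i, (dd (x1 i) (y1 i) * dd (x2 i) (y2 i) + dd (x1 i) (y2 i) * dd (x2 i) (y1 i)) := by
  have h1 : ∀ f : Fin N → Fin 6,
      prodState f x1 * prodState f x2 * conj (prodState f y1) * conj (prodState f y2)
        = ∏ i, (qs (f i) (x1 i) * qs (f i) (x2 i) * conj (qs (f i) (y1 i)) *
            conj (qs (f i) (y2 i))) := by
    intro f
    simp only [prodState, map_prod, ← Finset.prod_mul_distrib]
  simp_rw [h1]
  rw [← Fintype.piFinset_univ,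
    ← Finset.prod_univ_sum (t := fun _ : Fin N => (Finset.univ : Finset (Fin 6)))
      (f := fun i s => qs s (x1 i) * qs s (x2 i) * conj (qs s (y1 i)) * conj (qs s (y2 i)))]
  exact Finset.prod_congr rfl fun i _ => site_moment _ _ _ _

lemma full_delta {N : ℕ} (w y : Fin N → Fin 2) :
    ∏ i, dd (w i) (y i) = if w = y then 1 else 0 := by
  by_cases h : w = y
  · simp [h, dd]
  · obtain ⟨i, hi⟩ := Function.ne_iff.mp h
    rw [if_neg h]
    exact Finset.prod_eq_zero (Finset.mem_univ i) (by simp [dd, hi])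

lemma delta_prod {N : ℕ} (t : Finset (Fin N)) (u v y : Fin N → Fin 2) :
    ((∏ i ∈ t, dd (u i) (y i)) * ∏ i ∈ tᶜ, dd (v i) (y i))
      = if merge t u v = y then 1 else 0 := by
  rw [← full_delta]
  have : ∀ i : Fin N, dd (merge t u v i) (y i)
      = if i ∈ t then dd (u i) (y i) else dd (v i) (y i) := by
    intro i; by_cases h : i ∈ t <;> simp [merge, h]
  simp_rw [this]
  rw [Finset.prod_ite, Finset.filter_mem_eq_inter, Finset.univ_inter]
  congr 1
  congr 1
  ext i; simp

/-- Cauchy–Schwarz for finite complex sums. -/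
lemma cs_bound {γ : Type*} [Fintype γ] (u v : γ → ℂ) :
    Complex.normSq (∑ c, conj (u c) * v c)
      ≤ (∑ c, Complex.normSq (u c)) * (∑ c, Complex.normSq (v c)) := by
  have h1 : ‖∑ c, conj (u c) * v c‖ ≤ ∑ c, ‖u c‖ * ‖v c‖ := by
    refine (norm_sum_le _ _).trans (le_of_eq (Finset.sum_congr rfl fun c _ => ?_))
    rw [norm_mul, RCLike.norm_conj]
  have h2 : (∑ c, ‖u c‖ * ‖v c‖) ^ 2 ≤ (∑ c, ‖u c‖ ^ 2) * (∑ c, ‖v c‖ ^ 2) :=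
    Finset.sum_mul_sq_le_sq_mul_sq _ _ _
  have hn : ∀ z : ℂ, Complex.normSq z = ‖z‖ ^ 2 := fun z => by
    rw [Complex.normSq_eq_norm_sq]
  calc Complex.normSq (∑ c, conj (u c) * v c) = ‖∑ c, conj (u c) * v c‖ ^ 2 := hn _
      _ ≤ (∑ c, ‖u c‖ * ‖v c‖) ^ 2 := by
        exact pow_le_pow_left₀ (norm_nonneg _) h1 2
      _ ≤ _ := by
        refine h2.trans (le_of_eq ?_)
        simp_rw [hn]

/-- The purity-type quantity for each swap subset is at most `1`. -/
lemma T_re_le {N : ℕ} (t : Finset (Fin N)) (w : (Fin N → Fin 2) → ℂ)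
    (hw : ∑ x : Fin N → Fin 2, Complex.normSq (w x) = 1) :
    (∑ y1 : Fin N → Fin 2, ∑ y2 : Fin N → Fin 2,
      conj (w (merge t y1 y2)) * conj (w (merge t y2 y1)) * w y1 * w y2).re ≤ 1 := by
  classical
  set e := Equiv.piEquivPiSubtypeProd (fun i : Fin N => i ∈ t) (fun _ => Fin 2) with he
  set B := fun pc => w (e.symm pc) with hB
  have hmerge : ∀ P Q : ({i : Fin N // i ∈ t} → Fin 2) × ({i : Fin N // ¬ i ∈ t} → Fin 2),
      merge t (e.symm P) (e.symm Q) = e.symm (P.1, Q.2) := by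
    intro P Q
    funext i
    by_cases h : i ∈ t <;>
      simp [merge, h, he, Equiv.piEquivPiSubtypeProd]
  have step1 : (∑ y1 : Fin N → Fin 2, ∑ y2 : Fin N → Fin 2,
      conj (w (merge t y1 y2)) * conj (w (merge t y2 y1)) * w y1 * w y2)
      = ∑ P, ∑ Q, conj (B (P.1, Q.2)) * conj (B (Q.1, P.2)) * B P * B Q := by
    rw [← Equiv.sum_comp e.symm (fun y1 => ∑ y2 : Fin N → Fin 2,
      conj (w (merge t y1 y2)) * conj (w (merge t y2 y1)) * w y1 * w y2)]
    refine Finset.sum_congr rfl fun P _ => ?_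
    rw [← Equiv.sum_comp e.symm (fun y2 =>
      conj (w (merge t (e.symm P) y2)) * conj (w (merge t y2 (e.symm P))) * w (e.symm P) * w y2)]
    refine Finset.sum_congr rfl fun Q _ => ?_
    rw [hmerge P Q, hmerge Q P]
  have step2 : (∑ P, ∑ Q, conj (B (P.1, Q.2)) * conj (B (Q.1, P.2)) * B P * B Q)
      = ∑ a, ∑ a', ((Complex.normSq (∑ c, conj (B (a', c)) * B (a, c)) : ℝ) : ℂ) := by
    rw [Fintype.sum_prod_type]
    simp_rw [Fintype.sum_prod_type]
    refine Finset.sum_congr rfl fun a _ => ?_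
    rw [Finset.sum_comm]
    refine Finset.sum_congr rfl fun a' _ => ?_
    have expand : ∑ c, ∑ c', conj (B (a, c')) * conj (B (a', c)) * B (a, c) * B (a', c')
        = (∑ c, conj (B (a', c)) * B (a, c)) * (∑ c', conj (B (a, c')) * B (a', c')) := by
      rw [Finset.sum_mul_sum]
      exact Finset.sum_congr rfl fun c _ => Finset.sum_congr rfl fun c' _ => by ring
    have hconj : (∑ c', conj (B (a, c')) * B (a', c'))
        = conj (∑ c, conj (B (a', c)) * B (a, c)) := by
      rw [map_sum]
      exact Finset.sum_congr rfl fun c _ => by rw [map_mul, Complex.conj_conj]; ring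
    rw [expand, hconj, Complex.mul_conj]
  rw [step1, step2]
  have re_eq : (∑ a, ∑ a', ((Complex.normSq (∑ c, conj (B (a', c)) * B (a, c)) : ℝ) : ℂ)).re
      = ∑ a, ∑ a', Complex.normSq (∑ c, conj (B (a', c)) * B (a, c)) := by
    rw [Complex.re_sum]
    exact Finset.sum_congr rfl fun a _ => by rw [Complex.re_sum]; simp
  rw [re_eq]
  have hw' : ∑ a, ∑ c, Complex.normSq (B (a, c)) = 1 := by
    rw [← Equiv.sum_comp e.symm (fun x => Complex.normSq (w x))] at hw
    rw [Fintype.sum_prod_type] at hw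
    exact hw
  calc ∑ a, ∑ a', Complex.normSq (∑ c, conj (B (a', c)) * B (a, c))
      ≤ ∑ a, ∑ a', (∑ c, Complex.normSq (B (a', c))) * (∑ c, Complex.normSq (B (a, c))) := by
        refine Finset.sum_le_sum fun a _ => Finset.sum_le_sum fun a' _ => cs_bound _ _
    _ = (∑ a, ∑ c, Complex.normSq (B (a, c))) * (∑ a', ∑ c, Complex.normSq (B (a', c))) := by
        rw [Finset.sum_mul_sum]
        refine Finset.sum_congr rfl fun a _ => Finset.sum_congr rfl fun a' _ => mul_comm _ _
    _ = 1 := by rw [hw']; norm_num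

lemma inner_collapse {N : ℕ} (w : (Fin N → Fin 2) → ℂ) (t : Finset (Fin N))
    (y1 y2 : Fin N → Fin 2) :
    ∑ x1 : Fin N → Fin 2, ∑ x2 : Fin N → Fin 2,
        (conj (w x1) * conj (w x2) * w y1 * w y2) *
          ((∏ i ∈ t, dd (x1 i) (y1 i) * dd (x2 i) (y2 i)) *
            ∏ i ∈ Finset.univ \ t, dd (x1 i) (y2 i) * dd (x2 i) (y1 i))
      = conj (w (merge t y1 y2)) * conj (w (merge t y2 y1)) * w y1 * w y2 := by
  have regroup : ∀ x1 x2 : Fin N → Fin 2,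
      ((∏ i ∈ t, dd (x1 i) (y1 i) * dd (x2 i) (y2 i)) *
          ∏ i ∈ Finset.univ \ t, dd (x1 i) (y2 i) * dd (x2 i) (y1 i))
        = (if merge t y1 y2 = x1 then (1:ℂ) else 0) *
            (if merge t y2 y1 = x2 then (1:ℂ) else 0) := by
    intro x1 x2
    rw [← Finset.compl_eq_univ_sdiff, Finset.prod_mul_distrib, Finset.prod_mul_distrib,
      ← delta_prod t y1 y2 x1, ← delta_prod t y2 y1 x2]
    simp_rw [dd_comm]
    ring
  simp_rw [regroup]
  have h1 : ∀ x1 : Fin N → Fin 2,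
      (∑ x2 : Fin N → Fin 2, (conj (w x1) * conj (w x2) * w y1 * w y2) *
        ((if merge t y1 y2 = x1 then (1:ℂ) else 0) * (if merge t y2 y1 = x2 then (1:ℂ) else 0)))
      = (conj (w x1) * conj (w (merge t y2 y1)) * w y1 * w y2) *
          (if merge t y1 y2 = x1 then (1:ℂ) else 0) := by
    intro x1
    rw [Finset.sum_eq_single (merge t y2 y1)]
    · simp
    · intro x2 _ hx2
      simp [Ne.symm hx2]
    · simp
  simp_rw [h1]
  rw [Finset.sum_eq_single (merge t y1 y2)]
  · simp
  · intro x1 _ hx1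
    simp [Ne.symm hx1]
  · simp

/-- Expansion of the averaged fourth power into swap-subset contributions. -/
lemma expand_j {N : ℕ} (w : (Fin N → Fin 2) → ℂ) :
    (∑ f : Fin N → Fin 6,
      (∑ x, conj (w x) * prodState f x) * (∑ x, conj (w x) * prodState f x) *
        conj (∑ x, conj (w x) * prodState f x) * conj (∑ x, conj (w x) * prodState f x))
    = ∑ t ∈ (Finset.univ : Finset (Fin N)).powerset,
        ∑ y1 : Fin N → Fin 2, ∑ y2 : Fin N → Fin 2,
          conj (w (merge t y1 y2)) * conj (w (merge t y2 y1)) * w y1 * w y2 := by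
  have hz : ∀ f : Fin N → Fin 6,
      (∑ x, conj (w x) * prodState f x) * (∑ x, conj (w x) * prodState f x) *
        conj (∑ x, conj (w x) * prodState f x) * conj (∑ x, conj (w x) * prodState f x)
      = ∑ y1 : Fin N → Fin 2, ∑ y2 : Fin N → Fin 2, ∑ x1 : Fin N → Fin 2, ∑ x2 : Fin N → Fin 2,
          (conj (w x1) * conj (w x2) * w y1 * w y2) *
            (prodState f x1 * prodState f x2 * conj (prodState f y1) *
              conj (prodState f y2)) := by
    intro f
    simp only [map_sum, map_mul, Complex.conj_conj, Finset.sum_mul, Finset.mul_sum]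
    exact Finset.sum_congr rfl fun y1 _ => Finset.sum_congr rfl fun y2 _ =>
      Finset.sum_congr rfl fun x1 _ => Finset.sum_congr rfl fun x2 _ => by ring
  simp_rw [hz]
  rw [Finset.sum_comm]
  refine Eq.trans (Finset.sum_congr rfl fun y1 _ => Finset.sum_comm) ?_
  refine Eq.trans (Finset.sum_congr rfl fun y1 _ => Finset.sum_congr rfl fun y2 _ =>
    Finset.sum_comm) ?_
  refine Eq.trans (Finset.sum_congr rfl fun y1 _ => Finset.sum_congr rfl fun y2 _ =>
    Finset.sum_congr rfl fun x1 _ => Finset.sum_comm) ?_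
  simp_rw [← Finset.mul_sum, moment_prod, Finset.prod_add, Finset.mul_sum]
  -- now: ∑ y1 ∑ y2 ∑ x1 ∑ x2 ∑ t, coeff * (∏ ...)
  refine Eq.trans (Finset.sum_congr rfl fun y1 _ => Finset.sum_congr rfl fun y2 _ =>
    Finset.sum_congr rfl fun x1 _ => Finset.sum_comm) ?_
  refine Eq.trans (Finset.sum_congr rfl fun y1 _ => Finset.sum_congr rfl fun y2 _ =>
    Finset.sum_comm) ?_
  refine Eq.trans (Finset.sum_congr rfl fun y1 _ => Finset.sum_comm) ?_
  refine Eq.trans Finset.sum_comm ?_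
  refine Finset.sum_congr rfl fun t _ => ?_
  refine Finset.sum_congr rfl fun y1 _ => Finset.sum_congr rfl fun y2 _ => ?_
  exact inner_collapse w t y1 y2

lemma norm4 (z : ℂ) : ‖z‖ ^ 4 = (z * z * conj z * conj z).re := by
  have h : z * z * conj z * conj z
      = ((Complex.normSq z : ℝ) : ℂ) * ((Complex.normSq z : ℝ) : ℂ) := by
    rw [← Complex.mul_conj]; ring
  rw [h, ← Complex.ofReal_mul, Complex.ofReal_re, Complex.normSq_eq_norm_sq]
  ring

/-- For any orthonormal basis `{|j⟩}` of `(ℂ²)^{⊗N}`, the average over all `6^N` states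
`|ψ⟩ ∈ S` of `Σ_j |⟨j|ψ⟩|⁴` (i.e. `E_{|ψ⟩∼𝓔} 1/D^eff_ψ`) is at most `(2/3)^N`. -/
theorem average_inverse_effective_dimension_le (N : ℕ)
    (b : (Fin N → Fin 2) → ((Fin N → Fin 2) → ℂ))
    (hb : ∀ j k, star (b j) ⬝ᵥ b k = if j = k then 1 else 0) :
    ((6 : ℝ) ^ N)⁻¹ *
        ∑ f : Fin N → Fin 6, ∑ j : Fin N → Fin 2, ‖star (b j) ⬝ᵥ prodState f‖ ^ 4
      ≤ (2 / 3 : ℝ) ^ N := by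
  have hdot : ∀ (j : Fin N → Fin 2) (f : Fin N → Fin 6),
      star (b j) ⬝ᵥ prodState f = ∑ x, conj (b j x) * prodState f x := by
    intro j f
    simp [dotProduct, Pi.star_apply, Complex.star_def]
  have hnorm : ∀ j : Fin N → Fin 2, ∑ x : Fin N → Fin 2, Complex.normSq (b j x) = 1 := by
    intro j
    have := hb j j
    rw [if_pos rfl] at this
    have h2 : star (b j) ⬝ᵥ b j
        = ((∑ x : Fin N → Fin 2, Complex.normSq (b j x) : ℝ) : ℂ) := by
      rw [Complex.ofReal_sum]
      simp only [dotProduct, Pi.star_apply, Complex.star_def]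
      exact Finset.sum_congr rfl fun x _ => by
        rw [mul_comm, Complex.mul_conj]
    rw [h2] at this
    exact_mod_cast this
  have key : ∀ j : Fin N → Fin 2,
      ∑ f : Fin N → Fin 6, ‖star (b j) ⬝ᵥ prodState f‖ ^ 4 ≤ (2 : ℝ) ^ N := by
    intro j
    have h1 : ∑ f : Fin N → Fin 6, ‖star (b j) ⬝ᵥ prodState f‖ ^ 4
        = (∑ t ∈ (Finset.univ : Finset (Fin N)).powerset,
            ∑ y1 : Fin N → Fin 2, ∑ y2 : Fin N → Fin 2,
              conj (b j (merge t y1 y2)) * conj (b j (merge t y2 y1)) *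
                b j y1 * b j y2).re := by
      rw [← expand_j (b j), Complex.re_sum]
      refine Finset.sum_congr rfl fun f _ => ?_
      rw [hdot j f, norm4]
    rw [h1, Complex.re_sum]
    calc ∑ t ∈ (Finset.univ : Finset (Fin N)).powerset,
          (∑ y1 : Fin N → Fin 2, ∑ y2 : Fin N → Fin 2,
            conj (b j (merge t y1 y2)) * conj (b j (merge t y2 y1)) * b j y1 * b j y2).re
        ≤ ∑ _t ∈ (Finset.univ : Finset (Fin N)).powerset, (1 : ℝ) := by
          exact Finset.sum_le_sum fun t _ => T_re_le t (b j) (hnorm j)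
      _ = (2 : ℝ) ^ N := by
          rw [Finset.sum_const, Finset.card_powerset, Finset.card_univ, Fintype.card_fin]
          simp
  have total : ∑ f : Fin N → Fin 6, ∑ j : Fin N → Fin 2, ‖star (b j) ⬝ᵥ prodState f‖ ^ 4
      ≤ (2 : ℝ) ^ N * (2 : ℝ) ^ N := by
    rw [Finset.sum_comm]
    calc ∑ j : Fin N → Fin 2, ∑ f : Fin N → Fin 6, ‖star (b j) ⬝ᵥ prodState f‖ ^ 4
        ≤ ∑ _j : Fin N → Fin 2, (2 : ℝ) ^ N := Finset.sum_le_sum fun j _ => key j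
      _ = (2 : ℝ) ^ N * (2 : ℝ) ^ N := by
          rw [Finset.sum_const, Finset.card_univ, Fintype.card_fun, Fintype.card_fin,
            Fintype.card_fin]
          simp [mul_comm]
  have hfin : ((6 : ℝ) ^ N)⁻¹ * ((2 : ℝ) ^ N * (2 : ℝ) ^ N) = (2 / 3 : ℝ) ^ N := by
    rw [← inv_pow, ← mul_pow, ← mul_pow]
    norm_num
  calc ((6 : ℝ) ^ N)⁻¹ *
        ∑ f : Fin N → Fin 6, ∑ j : Fin N → Fin 2, ‖star (b j) ⬝ᵥ prodState f‖ ^ 4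
      ≤ ((6 : ℝ) ^ N)⁻¹ * ((2 : ℝ) ^ N * (2 : ℝ) ^ N) := by
        refine mul_le_mul_of_nonneg_left total (by positivity)
    _ = (2 / 3 : ℝ) ^ N := hfin
end

section
/- For any orthonormal basis {|j⟩}_{j=1}^{2^N} of (ℂ²)^{⊗N}, if |ψ⟩ is drawn uniformly at random from S, then with probability at least 1 − (2/3)^{N/2} one has Σ_{j=1}^{2^N} |⟨j|ψ⟩|⁴ ≤ (2/3)^{N/2}, i.e., D^eff_ψ ≥ (3/2)^{N/2}. -/
open scoped Matrix ComplexConjugate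

set_option maxHeartbeats 2000000 in
lemma qs_design (x y z w : Fin 2) :
    ∑ s : Fin 6, qs s x * conj (qs s y) * (qs s z * conj (qs s w)) =
      ∑ u : Bool, (if y = (if u then z else x) then 1 else 0) *
        (if w = (if u then x else z) then (1:ℂ) else 0) := by
  have h2 : (Real.sqrt 2 : ℂ)⁻¹ * (Real.sqrt 2 : ℂ)⁻¹ = (2:ℂ)⁻¹ := by
    rw [← mul_inv]; norm_cast
    rw [Real.mul_self_sqrt] <;> norm_num
  have h4 : (Real.sqrt 2 : ℂ)⁻¹ ^ 4 = (4:ℂ)⁻¹ := by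
    have : (Real.sqrt 2 : ℂ)⁻¹ ^ 4 = ((Real.sqrt 2 : ℂ)⁻¹ * (Real.sqrt 2 : ℂ)⁻¹)^2 := by ring
    rw [this, h2]; norm_num
  have hc : conj ((Real.sqrt 2 : ℂ)⁻¹) = (Real.sqrt 2 : ℂ)⁻¹ := by
    rw [map_inv₀, Complex.conj_ofReal]
  rw [Fin.sum_univ_six, Fintype.sum_bool]
  fin_cases x <;> fin_cases y <;> fin_cases z <;> fin_cases w <;>
    · simp only [qs, Matrix.cons_val_zero, Matrix.cons_val_one, Matrix.head_cons, map_mul,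
        map_neg, map_one, map_zero, Complex.conj_I, hc, Fin.mk_one, Fin.zero_eta,
        Fin.isValue, if_true, if_false, one_ne_zero, zero_ne_one, reduceIte]
      ring_nf
      norm_num [Complex.I_sq, h4]

lemma sum_fun_prod {ι : Type*} [Fintype ι] [DecidableEq ι] {β : Type*} [Fintype β]
    (G : ι → β → ℂ) : ∑ f : ι → β, ∏ i, G i (f i) = ∏ i, ∑ s, G i s := by
  rw [Finset.prod_univ_sum, Fintype.piFinset_univ]

lemma prodIndicator' {ι β : Type*} [Fintype ι] [DecidableEq β] (y c : ι → β) :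
    ∏ i, (if y i = c i then (1:ℂ) else 0) = if y = c then 1 else 0 := by
  by_cases h : y = c
  · simp [h]
  · obtain ⟨i, hi⟩ := Function.ne_iff.mp h
    rw [if_neg h]
    exact Finset.prod_eq_zero (Finset.mem_univ i) (by simp [hi])

/-- merge: `m g u v i = u i` if `g i`, else `v i`. -/
def mg {N : ℕ} (g : Fin N → Bool) (u v : Fin N → Fin 2) : Fin N → Fin 2 :=
  fun i => if g i then u i else v i

lemma mg_invol {N : ℕ} (g : Fin N → Bool) (x z : Fin N → Fin 2) :
    mg g (mg g x z) (mg g z x) = x ∧ mg g (mg g z x) (mg g x z) = z := by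
  constructor <;> · funext i; simp only [mg]; by_cases h : g i <;> simp [h]

lemma sum_swap4 {α : Type*} [Fintype α] (F G : α → α → α → α → ℂ)
    (h : ∀ x y z w, F x y z w = G w z y x) :
    ∑ x, ∑ y, ∑ z, ∑ w, F x y z w = ∑ x, ∑ y, ∑ z, ∑ w, G x y z w := by
  calc ∑ x, ∑ y, ∑ z, ∑ w, F x y z w
      = ∑ p : α × α × α × α, F p.1 p.2.1 p.2.2.1 p.2.2.2 := by
        simp [Fintype.sum_prod_type]
    _ = ∑ p : α × α × α × α, G p.1 p.2.1 p.2.2.1 p.2.2.2 := by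
        rw [← Equiv.sum_comp (Function.Involutive.toPerm
          (fun p : α × α × α × α => (p.2.2.2, p.2.2.1, p.2.1, p.1)) (fun p => rfl))
          (fun p : α × α × α × α => G p.1 p.2.1 p.2.2.1 p.2.2.2)]
        exact Finset.sum_congr rfl fun p _ => h p.1 p.2.1 p.2.2.1 p.2.2.2
    _ = ∑ x, ∑ y, ∑ z, ∑ w, G x y z w := by
        simp [Fintype.sum_prod_type]

lemma sum_pull5 {α β : Type*} [Fintype α] [Fintype β] (F : α → α → α → α → β → ℂ) :
    ∑ x, ∑ y, ∑ z, ∑ w, ∑ g, F x y z w g = ∑ g, ∑ x, ∑ y, ∑ z, ∑ w, F x y z w g := by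
  calc ∑ x, ∑ y, ∑ z, ∑ w, ∑ g, F x y z w g
      = ∑ p : α × α × α × α, ∑ g, F p.1 p.2.1 p.2.2.1 p.2.2.2 g := by
        simp [Fintype.sum_prod_type]
    _ = ∑ g, ∑ p : α × α × α × α, F p.1 p.2.1 p.2.2.1 p.2.2.2 g := Finset.sum_comm
    _ = ∑ g, ∑ x, ∑ y, ∑ z, ∑ w, F x y z w g := by
        simp [Fintype.sum_prod_type]

set_option maxHeartbeats 2000000 in
/-- The key moment bound: for a unit vector `a`,
`∑_f ‖⟨a, ψ_f⟩‖⁴ ≤ 2 ^ N`. -/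
lemma key (N : ℕ) (a : (Fin N → Fin 2) → ℂ) (ha : ∑ x, ‖a x‖ ^ 2 = 1) :
    ∑ f : Fin N → Fin 6, ‖∑ x, a x * prodState f x‖ ^ 4 ≤ 2 ^ N := by
  classical
  set A : (Fin N → Fin 6) → ℂ := fun f => ∑ x, a x * prodState f x with hA
  -- Step 1: rewrite each ‖A f‖⁴ as real part of a complex product
  have h1 : ∀ f, ‖A f‖ ^ 4 = (A f * conj (A f) * (A f * conj (A f))).re := by
    intro f
    rw [Complex.mul_conj]
    norm_cast
    rw [Complex.normSq_eq_norm_sq]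
    ring
  -- Step 2: per-f expansion as a quadruple sum
  have h2 : ∀ f, A f * conj (A f) * (A f * conj (A f)) =
      ∑ x : (Fin N → Fin 2), ∑ y : (Fin N → Fin 2), ∑ z : (Fin N → Fin 2), ∑ w : (Fin N → Fin 2),
        (a x * conj (a y) * (a z * conj (a w))) *
          ∏ i, (qs (f i) (x i) * conj (qs (f i) (y i)) *
            (qs (f i) (z i) * conj (qs (f i) (w i)))) := by
    intro f
    have hconj : conj (A f) = ∑ y : (Fin N → Fin 2), conj (a y) * conj (prodState f y) := by
      rw [hA]; simp [map_sum]
    rw [hA, hconj]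
    simp only [Finset.sum_mul, Finset.mul_sum]
    refine sum_swap4 _ _ fun x y z w => ?_
    have hp : prodState f w * conj (prodState f z) * (prodState f y * conj (prodState f x)) =
        ∏ i, (qs (f i) (w i) * conj (qs (f i) (z i)) *
          (qs (f i) (y i) * conj (qs (f i) (x i)))) := by
      simp only [prodState, map_prod, ← Finset.prod_mul_distrib]
    rw [← hp]; ring
  -- Step 3: sum over f, swap, factorize, apply the design identity
  have h3 : ∑ f : Fin N → Fin 6, A f * conj (A f) * (A f * conj (A f)) =
      ∑ g : Fin N → Bool, ∑ x : (Fin N → Fin 2), ∑ z : (Fin N → Fin 2),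
        a x * conj (a (mg g z x)) * (a z * conj (a (mg g x z))) := by
    calc ∑ f : Fin N → Fin 6, A f * conj (A f) * (A f * conj (A f))
        = ∑ f : Fin N → Fin 6, ∑ x : (Fin N → Fin 2), ∑ y : (Fin N → Fin 2), ∑ z : (Fin N → Fin 2), ∑ w : (Fin N → Fin 2),
            (a x * conj (a y) * (a z * conj (a w))) *
              ∏ i, (qs (f i) (x i) * conj (qs (f i) (y i)) *
                (qs (f i) (z i) * conj (qs (f i) (w i)))) := by
          exact Finset.sum_congr rfl fun f _ => h2 f
      _ = ∑ x : (Fin N → Fin 2), ∑ y : (Fin N → Fin 2), ∑ z : (Fin N → Fin 2), ∑ w : (Fin N → Fin 2),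
            (a x * conj (a y) * (a z * conj (a w))) *
              ∑ g : Fin N → Bool, ∏ i,
                ((if y i = (if g i then z i else x i) then 1 else 0) *
                  (if w i = (if g i then x i else z i) then (1:ℂ) else 0)) := by
          rw [Finset.sum_comm]
          refine Finset.sum_congr rfl fun x _ => ?_
          rw [Finset.sum_comm]
          refine Finset.sum_congr rfl fun y _ => ?_
          rw [Finset.sum_comm]
          refine Finset.sum_congr rfl fun z _ => ?_
          rw [Finset.sum_comm]
          refine Finset.sum_congr rfl fun w _ => ?_
          rw [← Finset.mul_sum]
          congr 1
          calc ∑ f : Fin N → Fin 6, ∏ i, (qs (f i) (x i) * conj (qs (f i) (y i)) *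
                (qs (f i) (z i) * conj (qs (f i) (w i))))
              = ∏ i, ∑ s : Fin 6, qs s (x i) * conj (qs s (y i)) *
                  (qs s (z i) * conj (qs s (w i))) := by
                exact sum_fun_prod (β := Fin 6) (fun i s => qs s (x i) * conj (qs s (y i)) *
                  (qs s (z i) * conj (qs s (w i))))
            _ = ∏ i, ∑ u : Bool, (if y i = (if u then z i else x i) then 1 else 0) *
                  (if w i = (if u then x i else z i) then (1:ℂ) else 0) :=
                Finset.prod_congr rfl fun i _ => qs_design (x i) (y i) (z i) (w i)
            _ = ∑ g : Fin N → Bool, ∏ i,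
                  ((if y i = (if g i then z i else x i) then 1 else 0) *
                    (if w i = (if g i then x i else z i) then (1:ℂ) else 0)) :=
                by exact (sum_fun_prod _).symm
      _ = ∑ x : (Fin N → Fin 2), ∑ y : (Fin N → Fin 2), ∑ z : (Fin N → Fin 2), ∑ w : (Fin N → Fin 2), ∑ g : Fin N → Bool,
            (a x * conj (a y) * (a z * conj (a w))) *
              ((if y = mg g z x then 1 else 0) * (if w = mg g x z then (1:ℂ) else 0)) := by
          refine Finset.sum_congr rfl fun x _ => Finset.sum_congr rfl fun y _ =>
            Finset.sum_congr rfl fun z _ => Finset.sum_congr rfl fun w _ => ?_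
          rw [Finset.mul_sum]
          refine Finset.sum_congr rfl fun g _ => ?_
          congr 1
          rw [Finset.prod_mul_distrib]
          exact congrArg₂ (· * ·) (prodIndicator' y (mg g z x)) (prodIndicator' w (mg g x z))
      _ = ∑ g : Fin N → Bool, ∑ x : (Fin N → Fin 2), ∑ y : (Fin N → Fin 2), ∑ z : (Fin N → Fin 2), ∑ w : (Fin N → Fin 2),
            (a x * conj (a y) * (a z * conj (a w))) *
              ((if y = mg g z x then 1 else 0) * (if w = mg g x z then (1:ℂ) else 0)) := by
          exact sum_pull5 _
      _ = ∑ g : Fin N → Bool, ∑ x : (Fin N → Fin 2), ∑ z : (Fin N → Fin 2),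
            a x * conj (a (mg g z x)) * (a z * conj (a (mg g x z))) := by
          refine Finset.sum_congr rfl fun g _ => Finset.sum_congr rfl fun x _ => ?_
          rw [Finset.sum_comm]
          refine Finset.sum_congr rfl fun z _ => ?_
          simp [Finset.sum_ite_eq, mul_ite, ite_mul, mul_zero, zero_mul, mul_one,
            mul_comm, mul_assoc, mul_left_comm]
  -- Step 4: bound the real part
  have habs : ∀ (g : Fin N → Bool) (x z : (Fin N → Fin 2)),
      (a x * conj (a (mg g z x)) * (a z * conj (a (mg g x z)))).re ≤
        (‖a x‖ * ‖a z‖) * (‖a (mg g z x)‖ * ‖a (mg g x z)‖) := by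
    intro g x z
    refine (Complex.re_le_norm _).trans (le_of_eq ?_)
    rw [norm_mul, norm_mul, norm_mul, RCLike.norm_conj, RCLike.norm_conj]
    ring
  have hS1 : ∑ x : (Fin N → Fin 2), ∑ z : (Fin N → Fin 2), (‖a x‖ * ‖a z‖) ^ 2 = 1 := by
    have h' : ∑ x : (Fin N → Fin 2), ∑ z : (Fin N → Fin 2), (‖a x‖ * ‖a z‖) ^ 2
        = (∑ x : (Fin N → Fin 2), ‖a x‖ ^ 2) * (∑ z : (Fin N → Fin 2), ‖a z‖ ^ 2) := by
      rw [Finset.sum_mul_sum]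
      exact Finset.sum_congr rfl fun x _ => Finset.sum_congr rfl fun z _ => (mul_pow _ _ 2)
    rw [h', ha, one_mul]
  have per_g : ∀ g : Fin N → Bool,
      ∑ x : (Fin N → Fin 2), ∑ z : (Fin N → Fin 2), (a x * conj (a (mg g z x)) * (a z * conj (a (mg g x z)))).re ≤ 1 := by
    intro g
    have hinv : Function.Involutive (fun p : (Fin N → Fin 2) × (Fin N → Fin 2) => (mg g p.2 p.1, mg g p.1 p.2)) := by
      intro p
      exact Prod.ext (mg_invol g p.1 p.2).1 (mg_invol g p.1 p.2).2
    have hq : ∑ x : (Fin N → Fin 2), ∑ z : (Fin N → Fin 2), (‖a (mg g z x)‖ * ‖a (mg g x z)‖) ^ 2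
        = ∑ x : (Fin N → Fin 2), ∑ z : (Fin N → Fin 2), (‖a x‖ * ‖a z‖) ^ 2 := by
      calc ∑ x : (Fin N → Fin 2), ∑ z : (Fin N → Fin 2), (‖a (mg g z x)‖ * ‖a (mg g x z)‖) ^ 2
          = ∑ p : (Fin N → Fin 2) × (Fin N → Fin 2), (‖a (mg g p.2 p.1)‖ * ‖a (mg g p.1 p.2)‖) ^ 2 :=
            by rw [Fintype.sum_prod_type]
        _ = ∑ p : (Fin N → Fin 2) × (Fin N → Fin 2), (‖a p.1‖ * ‖a p.2‖) ^ 2 :=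
            Fintype.sum_bijective _ hinv.bijective _ _ (fun p => rfl)
        _ = ∑ x : (Fin N → Fin 2), ∑ z : (Fin N → Fin 2), (‖a x‖ * ‖a z‖) ^ 2 := by rw [Fintype.sum_prod_type]
    have hle : ∑ x : (Fin N → Fin 2), ∑ z : (Fin N → Fin 2), (a x * conj (a (mg g z x)) * (a z * conj (a (mg g x z)))).re
        ≤ ∑ x : (Fin N → Fin 2), ∑ z : (Fin N → Fin 2), ((‖a x‖ * ‖a z‖) ^ 2 + (‖a (mg g z x)‖ * ‖a (mg g x z)‖) ^ 2) / 2 := by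
      refine Finset.sum_le_sum fun x _ => Finset.sum_le_sum fun z _ => ?_
      refine (habs g x z).trans ?_
      have h2 := two_mul_le_add_sq (‖a x‖ * ‖a z‖) (‖a (mg g z x)‖ * ‖a (mg g x z)‖)
      nlinarith [h2]
    refine hle.trans ?_
    have : ∑ x : (Fin N → Fin 2), ∑ z : (Fin N → Fin 2),
        ((‖a x‖ * ‖a z‖) ^ 2 + (‖a (mg g z x)‖ * ‖a (mg g x z)‖) ^ 2) / 2
        = ((∑ x : (Fin N → Fin 2), ∑ z : (Fin N → Fin 2), (‖a x‖ * ‖a z‖) ^ 2)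
          + ∑ x : (Fin N → Fin 2), ∑ z : (Fin N → Fin 2), (‖a (mg g z x)‖ * ‖a (mg g x z)‖) ^ 2) / 2 := by
      simp [Finset.sum_add_distrib, ← Finset.sum_div]
    rw [this, hq, hS1]
    norm_num
  -- Step 5: combine
  calc ∑ f : Fin N → Fin 6, ‖A f‖ ^ 4
      = ∑ f : Fin N → Fin 6, (A f * conj (A f) * (A f * conj (A f))).re :=
        Finset.sum_congr rfl fun f _ => h1 f
    _ = (∑ f : Fin N → Fin 6, A f * conj (A f) * (A f * conj (A f))).re :=
        (Complex.re_sum _ _).symm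
    _ = (∑ g : Fin N → Bool, ∑ x : (Fin N → Fin 2), ∑ z : (Fin N → Fin 2),
          a x * conj (a (mg g z x)) * (a z * conj (a (mg g x z)))).re := by rw [h3]
    _ = ∑ g : Fin N → Bool, ∑ x : (Fin N → Fin 2), ∑ z : (Fin N → Fin 2),
          (a x * conj (a (mg g z x)) * (a z * conj (a (mg g x z)))).re := by
        simp [Complex.re_sum]
    _ ≤ ∑ _g : Fin N → Bool, (1:ℝ) := Finset.sum_le_sum fun g _ => per_g g
    _ = 2 ^ N := by
        simp [Finset.card_univ]

/-- For any orthonormal basis `{|j⟩}` of `(ℂ²)^{⊗N}`, if `|ψ⟩` is drawn uniformly at random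
from `S`, then with probability at least `1 − (2/3)^{N/2}` one has
`Σ_j |⟨j|ψ⟩|⁴ ≤ (2/3)^{N/2}`, i.e. `D^eff_ψ ≥ (3/2)^{N/2}`. -/
theorem effective_dimension_large_with_high_probability (N : ℕ)
    (b : (Fin N → Fin 2) → ((Fin N → Fin 2) → ℂ))
    (hb : ∀ j k, star (b j) ⬝ᵥ b k = if j = k then 1 else 0) :
    1 - (2 / 3 : ℝ) ^ ((N : ℝ) / 2) ≤
      ((Finset.univ.filter fun f : Fin N → Fin 6 =>
          ∑ j : Fin N → Fin 2, ‖star (b j) ⬝ᵥ prodState f‖ ^ 4 ≤ (2 / 3 : ℝ) ^ ((N : ℝ) / 2)).card : ℝ)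
        / 6 ^ N := by
  set t : ℝ := (2 / 3 : ℝ) ^ ((N : ℝ) / 2) with ht
  have htpos : 0 < t := Real.rpow_pos_of_pos (by norm_num) _
  have ht2 : t ^ 2 = (2/3 : ℝ) ^ N := by
    have hN : ((N:ℝ)/2) * ((2:ℕ):ℝ) = (N:ℝ) := by push_cast; ring
    rw [ht, ← Real.rpow_natCast ((2/3:ℝ) ^ ((N:ℝ)/2)) 2,
      ← Real.rpow_mul (by norm_num : (0:ℝ) ≤ 2/3), hN, Real.rpow_natCast]
  have hXnn : ∀ f : Fin N → Fin 6,
      0 ≤ ∑ j : Fin N → Fin 2, ‖star (b j) ⬝ᵥ prodState f‖ ^ 4 :=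
    fun f => Finset.sum_nonneg fun j _ => by positivity
  have hper : ∀ j : Fin N → Fin 2,
      ∑ f : Fin N → Fin 6, ‖star (b j) ⬝ᵥ prodState f‖ ^ 4 ≤ 2 ^ N := by
    intro j
    have hnorm : ∑ x, ‖(conj (b j x) : ℂ)‖ ^ 2 = 1 := by
      have h := hb j j
      rw [if_pos rfl] at h
      have h' : ∑ x, (star (b j) x * b j x).re = 1 := by
        rw [← Complex.re_sum]
        rw [show ∑ x, star (b j) x * b j x = 1 from h]
        simp
      rw [← h']
      refine Finset.sum_congr rfl fun x _ => ?_
      have hsx : star (b j) x * b j x = conj (b j x) * b j x := rfl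
      rw [hsx, mul_comm, Complex.mul_conj]
      simp only [RCLike.norm_conj, Complex.normSq_eq_norm_sq,
        ← Complex.ofReal_pow, Complex.ofReal_re]
    have hk := key N (fun x => conj (b j x)) hnorm
    refine le_trans (le_of_eq ?_) hk
    refine Finset.sum_congr rfl fun f _ => ?_
    congr 1
  have hsum : ∑ f : Fin N → Fin 6, ∑ j : Fin N → Fin 2,
      ‖star (b j) ⬝ᵥ prodState f‖ ^ 4 ≤ 4 ^ N := by
    calc ∑ f : Fin N → Fin 6, ∑ j : Fin N → Fin 2, ‖star (b j) ⬝ᵥ prodState f‖ ^ 4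
        = ∑ j : Fin N → Fin 2, ∑ f : Fin N → Fin 6, ‖star (b j) ⬝ᵥ prodState f‖ ^ 4 :=
          Finset.sum_comm
      _ ≤ ∑ _j : Fin N → Fin 2, (2:ℝ) ^ N := Finset.sum_le_sum fun j _ => hper j
      _ = 2 ^ N * 2 ^ N := by
          rw [Finset.sum_const, nsmul_eq_mul, Finset.card_univ]
          norm_num [Fintype.card_fun]
      _ = 4 ^ N := by rw [← mul_pow]; norm_num
  set s := Finset.univ.filter (fun f : Fin N → Fin 6 =>
    ∑ j : Fin N → Fin 2, ‖star (b j) ⬝ᵥ prodState f‖ ^ 4 ≤ t) with hs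
  set sc := Finset.univ.filter (fun f : Fin N → Fin 6 =>
    ¬ (∑ j : Fin N → Fin 2, ‖star (b j) ⬝ᵥ prodState f‖ ^ 4 ≤ t)) with hsc
  have hcards : s.card + sc.card = 6 ^ N := by
    rw [hs, hsc, Finset.card_filter_add_card_filter_not, Finset.card_univ]
    simp [Fintype.card_fun]
  have hC : (sc.card : ℝ) * t ≤ 4 ^ N := by
    calc (sc.card : ℝ) * t = ∑ _f ∈ sc, t := by
          rw [Finset.sum_const, nsmul_eq_mul]
      _ ≤ ∑ f ∈ sc, ∑ j : Fin N → Fin 2, ‖star (b j) ⬝ᵥ prodState f‖ ^ 4 := by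
          refine Finset.sum_le_sum fun f hf => ?_
          rw [hsc, Finset.mem_filter] at hf
          exact le_of_lt (lt_of_not_ge hf.2)
      _ ≤ ∑ f : Fin N → Fin 6, ∑ j : Fin N → Fin 2, ‖star (b j) ⬝ᵥ prodState f‖ ^ 4 :=
          Finset.sum_le_sum_of_subset_of_nonneg (Finset.subset_univ _)
            (fun f _ _ => hXnn f)
      _ ≤ 4 ^ N := hsum
  have h46 : (4:ℝ) ^ N = 6 ^ N * t ^ 2 := by
    rw [ht2, ← mul_pow]; norm_num
  have hsc_le : (sc.card : ℝ) ≤ 6 ^ N * t := by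
    have h' : (sc.card : ℝ) * t ≤ (6 ^ N * t) * t := by
      rw [show (6:ℝ) ^ N * t * t = 6 ^ N * t ^ 2 by ring, ← h46]
      exact hC
    exact le_of_mul_le_mul_right h' htpos
  have hscard : (s.card : ℝ) = 6 ^ N - sc.card := by
    have h2 : ((s.card + sc.card : ℕ) : ℝ) = ((6 ^ N : ℕ) : ℝ) := by rw [hcards]
    push_cast at h2
    linarith
  rw [le_div_iff₀ (by positivity : (0:ℝ) < 6 ^ N)]
  rw [hscard]
  nlinarith [hsc_le, htpos.le]
end

section
/- For any ρ ∈ S^+ and any orthonormal basis {|j⟩}_{j=1}^{2^N} of (ℂ²)^{⊗N}, the average over the 6^{n(ρ)} states |ψ⟩ ∈ S_ρ of Σ_{j=1}^{2^N} |⟨j|ψ⟩|⁴ is at most (2/3)^{n(ρ)}, i.e., (1/|S_ρ|) Σ_{|ψ⟩∈S_ρ} 1/D^eff_ψ ≤ (2/3)^{n(ρ)}. -/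
open scoped Matrix ComplexConjugate

/-- Single-qubit density matrices indexing `S^+`: for `k < 6` the pure projector
`|v_k⟩⟨v_k|`, and for `k = 6` the maximally mixed state `I₂/2`. -/
noncomputable def qsDM (k : Fin 7) : Matrix (Fin 2) (Fin 2) ℂ :=
  if h : (k : ℕ) < 6 then Matrix.of fun a b => qs ⟨k, h⟩ a * conj (qs ⟨k, h⟩ b)
  else (2 : ℂ)⁻¹ • 1

/-- The element `ρ = ⊗_i qsDM (g i)` of `S^+` determined by `g : Fin N → Fin 7`. -/
noncomputable def sPlusState {N : ℕ} (g : Fin N → Fin 7) :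
    Matrix (Fin N → Fin 2) (Fin N → Fin 2) ℂ :=
  Matrix.of fun x y => ∏ i, qsDM (g i) (x i) (y i)

/-- `n(ρ)`: the number of tensor factors of `ρ ∈ S^+` equal to `I₂/2`. -/
def nMix {N : ℕ} (g : Fin N → Fin 7) : ℕ :=
  (Finset.univ.filter fun i => g i = 6).card

/-- `S_ρ`: the product states in `S` that agree with `ρ ∈ S^+` on every qubit where `ρ`
is pure. -/
def Srho {N : ℕ} (g : Fin N → Fin 7) : Finset (Fin N → Fin 6) :=
  Finset.univ.filter fun f => ∀ i, g i ≠ 6 → (g i : ℕ) = (f i : ℕ)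

-- ### infrastructure
noncomputable def Qp {N : ℕ} (g : Fin N → Fin 7) (i : Fin N) : Fin 2 → ℂ :=
  if h : (g i : ℕ) < 6 then qs ⟨g i, h⟩ else fun _ => 1

noncomputable def Qv {N : ℕ} (g : Fin N → Fin 7) (x : Fin N → Fin 2) : ℂ :=
  ∏ i, Qp g i (x i)

def DmR {N : ℕ} (g : Fin N → Fin 7) (x z : Fin N → Fin 2) : ℝ :=
  ∏ i, if g i = 6 then (if x i = z i then 1 else 0) else 1

noncomputable def Ff {N : ℕ} (g : Fin N → Fin 7)
    (b : (Fin N → Fin 2) → ((Fin N → Fin 2) → ℂ)) (j z : Fin N → Fin 2) : ℂ :=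
  ∑ x, conj (b j x) * Qv g x * (DmR g x z : ℂ)

def mrg {N : ℕ} (T : Fin N → Bool) (z z' : Fin N → Fin 2) : Fin N → Fin 2 :=
  fun i => if T i then z' i else z i

lemma gval_lt {N : ℕ} (g : Fin N → Fin 7) (i : Fin N) (h : ¬ g i = 6) : (g i : ℕ) < 6 := by
  have h1 : (g i : ℕ) < 7 := (g i).isLt
  have h2 : (g i : ℕ) ≠ 6 := fun hc => h (Fin.ext hc)
  omega

noncomputable def tsel {N : ℕ} (g : Fin N → Fin 7) (i : Fin N) : Finset (Fin 6) :=
  if h : g i = 6 then Finset.univ else {⟨(g i : ℕ), gval_lt g i h⟩}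

def usel {N : ℕ} (g : Fin N → Fin 7) (i : Fin N) : Finset Bool :=
  if g i = 6 then Finset.univ else {false}

lemma Srho_eq {N : ℕ} (g : Fin N → Fin 7) : Srho g = Fintype.piFinset (tsel g) := by
  ext f
  simp only [Srho, Finset.mem_filter, Finset.mem_univ, true_and, Fintype.mem_piFinset, tsel]
  constructor
  · intro h i
    by_cases hi : g i = 6
    · simp [hi]
    · simp only [hi, dif_neg, not_false_iff, Finset.mem_singleton]
      exact Fin.ext (h i hi).symm
  · intro h i hi
    have := h i
    simp only [hi, dif_neg, not_false_iff, Finset.mem_singleton] at this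
    rw [this]

lemma card_Srho {N : ℕ} (g : Fin N → Fin 7) : (Srho g).card = 6 ^ nMix g := by
  rw [Srho_eq, Fintype.card_piFinset]
  have : ∀ i, (tsel g i).card = if g i = 6 then 6 else 1 := by
    intro i
    by_cases hi : g i = 6 <;> simp [tsel, hi]
  simp only [this]
  rw [Finset.prod_ite, Finset.prod_const, Finset.prod_const]
  simp [nMix]

lemma card_piu {N : ℕ} (g : Fin N → Fin 7) :
    (Fintype.piFinset (usel g)).card = 2 ^ nMix g := by
  rw [Fintype.card_piFinset]
  have : ∀ i, (usel g i).card = if g i = 6 then 2 else 1 := by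
    intro i
    by_cases hi : g i = 6 <;> simp [usel, hi]
  simp only [this]
  rw [Finset.prod_ite, Finset.prod_const, Finset.prod_const]
  simp [nMix]

lemma nMix_le {N : ℕ} (g : Fin N → Fin 7) : nMix g ≤ N := by
  simpa [nMix] using (Finset.card_filter_le Finset.univ fun i => g i = 6).trans (by simp)

lemma colOrtho {N : ℕ} (b : (Fin N → Fin 2) → ((Fin N → Fin 2) → ℂ))
    (hb : ∀ j k, star (b j) ⬝ᵥ b k = if j = k then 1 else 0) (x y : Fin N → Fin 2) :
    ∑ j, conj (b j x) * b j y = if x = y then 1 else 0 := by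
  classical
  set M : Matrix (Fin N → Fin 2) (Fin N → Fin 2) ℂ := Matrix.of fun j x => b j x with hM
  have h1 : M * M.conjTranspose = 1 := by
    ext j k
    have := hb k j
    simp only [dotProduct, Pi.star_apply, RCLike.star_def] at this
    simp only [Matrix.mul_apply, Matrix.conjTranspose_apply, hM, Matrix.of_apply,
      Matrix.one_apply]
    rw [show (∑ xx : Fin N → Fin 2, b j xx * star (b k xx)) =
        ∑ xx : Fin N → Fin 2, (starRingEnd ℂ) (b k xx) * b j xx from
      Finset.sum_congr rfl fun xx _ => by simp [RCLike.star_def, mul_comm]]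
    rw [this]
    by_cases h : j = k <;> simp [h, eq_comm]
  have h2 : M.conjTranspose * M = 1 := mul_eq_one_comm.mp h1
  have h3 : (M.conjTranspose * M) x y = (1 : Matrix _ _ ℂ) x y := by rw [h2]
  simpa [Matrix.mul_apply, Matrix.conjTranspose_apply, hM, Matrix.one_apply,
    RCLike.star_def] using h3

lemma sqrt2_sq : ((Real.sqrt 2 : ℂ)) ^ 2 = 2 := by
  norm_cast; rw [Real.sq_sqrt (by norm_num)]

lemma sqrt2_pow4 : ((Real.sqrt 2 : ℂ)) ^ 4 = 4 := by
  have h : ((Real.sqrt 2 : ℂ))^4 = ((Real.sqrt 2:ℂ)^2)^2 := by ring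
  rw [h, sqrt2_sq]; norm_num

lemma conj_sqrt2 : conj ((Real.sqrt 2 : ℂ))⁻¹ = ((Real.sqrt 2 : ℂ))⁻¹ := by
  rw [map_inv₀, Complex.conj_ofReal]

lemma qs_norm (k : Fin 6) : ∑ a : Fin 2, qs k a * conj (qs k a) = 1 := by
  fin_cases k <;>
  simp [qs, Fin.sum_univ_two, map_mul, conj_sqrt2, Complex.conj_I] <;>
  ring_nf <;>
  simp [sqrt2_sq, Complex.I_sq] <;> ring_nf

lemma qs_moment (a b c d : Fin 2) :
    ∑ k : Fin 6, qs k a * conj (qs k b) * (qs k c * conj (qs k d)) =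
      (if a = b then 1 else 0) * (if c = d then 1 else 0) +
      (if a = d then 1 else 0) * (if c = b then 1 else 0) := by
  fin_cases a <;> fin_cases b <;> fin_cases c <;> fin_cases d <;>
  simp [qs, Fin.sum_univ_six, map_mul, conj_sqrt2, Complex.conj_I] <;>
  ring_nf <;>
  simp [sqrt2_sq, Complex.I_sq] <;> ring_nf <;>
  simp [sqrt2_sq, sqrt2_pow4, Complex.I_sq] <;> norm_num

lemma Qp_mixed {N : ℕ} (g : Fin N → Fin 7) (i : Fin N) (h : g i = 6) (a : Fin 2) :
    Qp g i a = 1 := by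
  have : ¬ ((g i : ℕ) < 6) := by rw [h]; decide
  simp [Qp, this]

lemma Qp_pure {N : ℕ} (g : Fin N → Fin 7) (i : Fin N) (h : ¬ g i = 6) :
    Qp g i = qs ⟨(g i : ℕ), gval_lt g i h⟩ := by
  simp [Qp, gval_lt g i h]

lemma Qp_norm {N : ℕ} (g : Fin N → Fin 7) (i : Fin N) :
    ∑ a : Fin 2, Qp g i a * conj (Qp g i a) = if g i = 6 then 2 else 1 := by
  by_cases h : g i = 6
  · simp [Qp_mixed g i h, h, Fin.sum_univ_two]
    try norm_num
  · rw [Qp_pure g i h, qs_norm]; simp [h]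

lemma delta4 (t : Bool) (xa ya xb yb : Fin 2) :
    (∑ a : Fin 2, ∑ a' : Fin 2,
      (if xa = a then (1:ℂ) else 0) * (if ya = (if t then a' else a) then 1 else 0) *
      ((if xb = a' then 1 else 0) * (if yb = (if t then a else a') then 1 else 0))) =
    (if t then (if xa = yb then (1:ℂ) else 0) * (if xb = ya then 1 else 0)
     else (if xa = ya then (1:ℂ) else 0) * (if xb = yb then 1 else 0)) := by
  cases t <;> fin_cases xa <;> fin_cases ya <;> fin_cases xb <;> fin_cases yb <;>
    simp [Fin.sum_univ_two]

noncomputable def Gv {N : ℕ} (g : Fin N → Fin 7)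
    (b : (Fin N → Fin 2) → ((Fin N → Fin 2) → ℂ)) (j x : Fin N → Fin 2) : ℂ :=
  conj (b j x) * Qv g x

noncomputable def dpat {N : ℕ} (g : Fin N → Fin 7) (T : Fin N → Bool)
    (x y x' y' : Fin N → Fin 2) : ℂ :=
  ∏ i, if g i = 6 then
      (if T i then (if x i = y' i then 1 else 0) * (if x' i = y i then 1 else 0)
       else (if x i = y i then 1 else 0) * (if x' i = y' i then 1 else 0))
    else 1

noncomputable def stuffT {N : ℕ} (g : Fin N → Fin 7)
    (b : (Fin N → Fin 2) → ((Fin N → Fin 2) → ℂ)) (j : Fin N → Fin 2)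
    (T : Fin N → Bool) : ℂ :=
  ∑ x, ∑ y, ∑ x', ∑ y',
    Gv g b j x * conj (Gv g b j y) * (Gv g b j x' * conj (Gv g b j y')) *
      dpat g T x y x' y'

lemma sum4 {α : Type*} [Fintype α] (A B C D : α → ℂ) :
    (∑ x, A x) * (∑ y, B y) * ((∑ x, C x) * (∑ y, D y)) =
      ∑ x, ∑ y, ∑ x', ∑ y', A x * B y * (C x' * D y') := by
  rw [Finset.sum_mul_sum, Finset.sum_mul_sum, Finset.sum_mul_sum]
  refine Finset.sum_congr rfl fun x _ => ?_
  rw [Finset.sum_comm]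
  refine Finset.sum_congr rfl fun y _ => ?_
  rw [Finset.sum_mul]
  refine Finset.sum_congr rfl fun x' _ => ?_
  rw [Finset.mul_sum]

lemma m4 {α β γ δ ε : Type*} (sa : Finset α) (sb : Finset β) (sc : Finset γ)
    (sd : Finset δ) (se : Finset ε) (H : α → β → γ → δ → ε → ℂ) :
    ∑ a ∈ sa, ∑ b ∈ sb, ∑ c ∈ sc, ∑ d ∈ sd, ∑ e ∈ se, H a b c d e =
    ∑ b ∈ sb, ∑ c ∈ sc, ∑ d ∈ sd, ∑ e ∈ se, ∑ a ∈ sa, H a b c d e := by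
  rw [Finset.sum_comm]
  refine Finset.sum_congr rfl fun b _ => ?_
  rw [Finset.sum_comm]
  refine Finset.sum_congr rfl fun c _ => ?_
  rw [Finset.sum_comm]
  refine Finset.sum_congr rfl fun d _ => ?_
  rw [Finset.sum_comm]

lemma inner_sum_eq {N : ℕ} (g : Fin N → Fin 7) (x y x' y' : Fin N → Fin 2) :
    (∑ f ∈ Srho g, ∏ i,
      (qs (f i) (x i) * conj (qs (f i) (y i)) * (qs (f i) (x' i) * conj (qs (f i) (y' i))))) =
    ∑ T ∈ Fintype.piFinset (usel g),
      (Qv g x * conj (Qv g y) * (Qv g x' * conj (Qv g y'))) * dpat g T x y x' y' := by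
  classical
  rw [Srho_eq, ← Finset.prod_univ_sum (tsel g) (fun i k =>
    qs k (x i) * conj (qs k (y i)) * (qs k (x' i) * conj (qs k (y' i))))]
  have hi : ∀ i ∈ Finset.univ, (∑ k ∈ tsel g i,
      qs k (x i) * conj (qs k (y i)) * (qs k (x' i) * conj (qs k (y' i)))) =
      ∑ s ∈ usel g i,
        (if g i = 6 then 1 else
          Qp g i (x i) * conj (Qp g i (y i)) * (Qp g i (x' i) * conj (Qp g i (y' i)))) *
        (if g i = 6 then
          (if s then (if x i = y' i then 1 else 0) * (if x' i = y i then 1 else 0)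
           else (if x i = y i then 1 else 0) * (if x' i = y' i then 1 else 0))
         else 1) := by
    intro i _
    by_cases h : g i = 6
    · simp only [tsel, dif_pos h, usel, if_pos h]
      rw [qs_moment]
      rw [Fintype.sum_bool]
      simp only [if_pos, if_neg, Bool.cond_eq_ite]
      norm_num
      ring
    · simp only [tsel, dif_neg h, usel, if_neg h]
      rw [Finset.sum_singleton, Finset.sum_singleton]
      rw [Qp_pure g i h]
      simp
  rw [Finset.prod_congr rfl hi, Finset.prod_univ_sum]
  refine Finset.sum_congr rfl fun T hT => ?_
  rw [Finset.prod_mul_distrib]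
  congr 1
  have h2 : ∀ i ∈ Finset.univ, (if g i = 6 then 1 else
      Qp g i (x i) * conj (Qp g i (y i)) * (Qp g i (x' i) * conj (Qp g i (y' i)))) =
      Qp g i (x i) * conj (Qp g i (y i)) * (Qp g i (x' i) * conj (Qp g i (y' i))) := by
    intro i _
    by_cases h : g i = 6
    · simp [h, Qp_mixed g i h]
    · simp [h]
  rw [Finset.prod_congr rfl h2]
  rw [show ∀ (F : Fin N → ℂ) (G : Fin N → ℂ) (H : Fin N → ℂ) (K : Fin N → ℂ),
    (∏ i, F i * G i * (H i * K i)) = (∏ i, F i) * (∏ i, G i) * ((∏ i, H i) * (∏ i, K i)) from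
    fun F G H K => by rw [Finset.prod_mul_distrib, Finset.prod_mul_distrib, Finset.prod_mul_distrib]]
  simp [Qv, map_prod]

lemma expand {N : ℕ} (g : Fin N → Fin 7) (b : (Fin N → Fin 2) → ((Fin N → Fin 2) → ℂ))
    (j : Fin N → Fin 2) :
    (∑ f ∈ Srho g,
      ((star (b j) ⬝ᵥ prodState f) * conj (star (b j) ⬝ᵥ prodState f) *
       ((star (b j) ⬝ᵥ prodState f) * conj (star (b j) ⬝ᵥ prodState f)))) =
    ∑ T ∈ Fintype.piFinset (usel g), stuffT g b j T := by
  classical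
  have hd : ∀ f : Fin N → Fin 6, star (b j) ⬝ᵥ prodState f =
      ∑ x, conj (b j x) * prodState f x := by
    intro f
    simp [dotProduct, RCLike.star_def]
  have hconj : ∀ f : Fin N → Fin 6, conj (star (b j) ⬝ᵥ prodState f) =
      ∑ y, b j y * conj (prodState f y) := by
    intro f
    rw [hd, map_sum]
    exact Finset.sum_congr rfl fun y _ => by simp [map_mul]
  have hterm : ∀ f ∈ Srho g,
      ((star (b j) ⬝ᵥ prodState f) * conj (star (b j) ⬝ᵥ prodState f) *
       ((star (b j) ⬝ᵥ prodState f) * conj (star (b j) ⬝ᵥ prodState f))) =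
      ∑ x, ∑ y, ∑ x', ∑ y',
        (conj (b j x) * b j y * (conj (b j x') * b j y')) *
          ∏ i, (qs (f i) (x i) * conj (qs (f i) (y i)) *
            (qs (f i) (x' i) * conj (qs (f i) (y' i)))) := by
    intro f _
    rw [hconj, hd, sum4]
    refine Finset.sum_congr rfl fun x _ => Finset.sum_congr rfl fun y _ =>
      Finset.sum_congr rfl fun x' _ => Finset.sum_congr rfl fun y' _ => ?_
    rw [show (∏ i, (qs (f i) (x i) * conj (qs (f i) (y i)) *
        (qs (f i) (x' i) * conj (qs (f i) (y' i))))) =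
        (∏ i, qs (f i) (x i)) * (∏ i, conj (qs (f i) (y i))) *
        ((∏ i, qs (f i) (x' i)) * (∏ i, conj (qs (f i) (y' i)))) from by
      rw [Finset.prod_mul_distrib, Finset.prod_mul_distrib, Finset.prod_mul_distrib]]
    simp only [prodState, map_prod]
    ring
  rw [Finset.sum_congr rfl hterm]
  rw [m4]
  simp only [← Finset.mul_sum]
  have hswap : ∀ x y x' y', (conj (b j x) * b j y * (conj (b j x') * b j y')) *
      (∑ f ∈ Srho g, ∏ i, (qs (f i) (x i) * conj (qs (f i) (y i)) *
        (qs (f i) (x' i) * conj (qs (f i) (y' i))))) =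
      ∑ T ∈ Fintype.piFinset (usel g),
        Gv g b j x * conj (Gv g b j y) * (Gv g b j x' * conj (Gv g b j y')) *
          dpat g T x y x' y' := by
    intro x y x' y'
    rw [inner_sum_eq, Finset.mul_sum]
    refine Finset.sum_congr rfl fun T _ => ?_
    simp only [Gv, map_mul, Complex.conj_conj]
    ring
  simp only [hswap]
  rw [← m4]
  rfl

lemma DmR_coe {N : ℕ} (g : Fin N → Fin 7) (x z : Fin N → Fin 2) :
    ((DmR g x z : ℝ) : ℂ) = ∏ i, (if g i = 6 then (if x i = z i then (1:ℂ) else 0) else 1) := by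
  unfold DmR
  push_cast
  exact Finset.prod_congr rfl fun i _ => by split_ifs <;> simp

lemma delta4' {N : ℕ} (g : Fin N → Fin 7) (T : Fin N → Bool) (x y x' y' : Fin N → Fin 2)
    (i : Fin N) :
    (∑ a : Fin 2, ∑ a' : Fin 2,
      (if g i = 6 then (if x i = a then (1:ℂ) else 0) else 1) *
      (if g i = 6 then (if y i = (if T i then a' else a) then (1:ℂ) else 0) else 1) *
      ((if g i = 6 then (if x' i = a' then (1:ℂ) else 0) else 1) *
       (if g i = 6 then (if y' i = (if T i then a else a') then (1:ℂ) else 0) else 1))) =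
    if g i = 6 then
      (if T i then (if x i = y' i then (1:ℂ) else 0) * (if x' i = y i then 1 else 0)
       else (if x i = y i then 1 else 0) * (if x' i = y' i then 1 else 0))
    else 4 := by
  by_cases h : g i = 6
  · simp only [h, if_true]
    exact delta4 (T i) (x i) (y i) (x' i) (y' i)
  · simp [h, Fin.sum_univ_two]
    norm_num

lemma deltaSum {N : ℕ} (g : Fin N → Fin 7) (T : Fin N → Bool) (x y x' y' : Fin N → Fin 2) :
    (∑ z : Fin N → Fin 2, ∑ z' : Fin N → Fin 2,
      ((DmR g x z : ℝ) : ℂ) * ((DmR g y (mrg T z z') : ℝ) : ℂ) *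
        (((DmR g x' z' : ℝ) : ℂ) * ((DmR g y' (mrg T z' z) : ℝ) : ℂ))) =
    (4 : ℂ) ^ (N - nMix g) * dpat g T x y x' y' := by
  classical
  have hterm : ∀ z z' : Fin N → Fin 2,
      ((DmR g x z : ℝ) : ℂ) * ((DmR g y (mrg T z z') : ℝ) : ℂ) *
        (((DmR g x' z' : ℝ) : ℂ) * ((DmR g y' (mrg T z' z) : ℝ) : ℂ)) =
      ∏ i, ((if g i = 6 then (if x i = z i then (1:ℂ) else 0) else 1) *
        (if g i = 6 then (if y i = (if T i then z' i else z i) then (1:ℂ) else 0) else 1) *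
        ((if g i = 6 then (if x' i = z' i then (1:ℂ) else 0) else 1) *
         (if g i = 6 then (if y' i = (if T i then z i else z' i) then (1:ℂ) else 0) else 1))) := by
    intro z z'
    rw [show (∏ i, ((if g i = 6 then (if x i = z i then (1:ℂ) else 0) else 1) *
        (if g i = 6 then (if y i = (if T i then z' i else z i) then (1:ℂ) else 0) else 1) *
        ((if g i = 6 then (if x' i = z' i then (1:ℂ) else 0) else 1) *
         (if g i = 6 then (if y' i = (if T i then z i else z' i) then (1:ℂ) else 0) else 1)))) =
        (∏ i, (if g i = 6 then (if x i = z i then (1:ℂ) else 0) else 1)) *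
        (∏ i, (if g i = 6 then (if y i = (if T i then z' i else z i) then (1:ℂ) else 0) else 1)) *
        ((∏ i, (if g i = 6 then (if x' i = z' i then (1:ℂ) else 0) else 1)) *
         (∏ i, (if g i = 6 then (if y' i = (if T i then z i else z' i) then (1:ℂ) else 0) else 1)))
      from by rw [Finset.prod_mul_distrib, Finset.prod_mul_distrib, Finset.prod_mul_distrib]]
    rw [DmR_coe, DmR_coe, DmR_coe, DmR_coe]
    rfl
  simp only [hterm]
  rw [show (∑ z : Fin N → Fin 2, ∑ z' : Fin N → Fin 2, ∏ i,
      ((if g i = 6 then (if x i = z i then (1:ℂ) else 0) else 1) *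
        (if g i = 6 then (if y i = (if T i then z' i else z i) then (1:ℂ) else 0) else 1) *
        ((if g i = 6 then (if x' i = z' i then (1:ℂ) else 0) else 1) *
         (if g i = 6 then (if y' i = (if T i then z i else z' i) then (1:ℂ) else 0) else 1)))) =
      ∏ i, (∑ a : Fin 2, ∑ a' : Fin 2,
      ((if g i = 6 then (if x i = a then (1:ℂ) else 0) else 1) *
        (if g i = 6 then (if y i = (if T i then a' else a) then (1:ℂ) else 0) else 1) *
        ((if g i = 6 then (if x' i = a' then (1:ℂ) else 0) else 1) *
         (if g i = 6 then (if y' i = (if T i then a else a') then (1:ℂ) else 0) else 1)))) from ?_]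
  · rw [Finset.prod_congr rfl fun i _ => delta4' g T x y x' y' i]
    have hsplit : ∀ i : Fin N, (if g i = 6 then
        (if T i then (if x i = y' i then (1:ℂ) else 0) * (if x' i = y i then 1 else 0)
         else (if x i = y i then 1 else 0) * (if x' i = y' i then 1 else 0))
        else 4) = (if g i = 6 then
        (if T i then (if x i = y' i then (1:ℂ) else 0) * (if x' i = y i then 1 else 0)
         else (if x i = y i then 1 else 0) * (if x' i = y' i then 1 else 0))
        else 1) * (if g i = 6 then 1 else 4) := by
      intro i; by_cases h : g i = 6 <;> simp [h]
    rw [Finset.prod_congr rfl fun i _ => hsplit i, Finset.prod_mul_distrib]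
    have h4 : (∏ i : Fin N, (if g i = 6 then (1:ℂ) else 4)) = 4 ^ (N - nMix g) := by
      rw [Finset.prod_ite, Finset.prod_const, Finset.prod_const]
      simp only [one_pow, one_mul]
      congr 1
      have := Finset.card_filter_add_card_filter_not (s := (Finset.univ : Finset (Fin N)))
        (p := fun i => g i = 6)
      simp only [Finset.card_univ, Fintype.card_fin] at this
      unfold nMix
      omega
    rw [h4, mul_comm]
    rfl
  · -- sum-product exchange
    have step1 : ∀ z : Fin N → Fin 2, (∑ z' : Fin N → Fin 2, ∏ i,
        ((if g i = 6 then (if x i = z i then (1:ℂ) else 0) else 1) *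
        (if g i = 6 then (if y i = (if T i then z' i else z i) then (1:ℂ) else 0) else 1) *
        ((if g i = 6 then (if x' i = z' i then (1:ℂ) else 0) else 1) *
         (if g i = 6 then (if y' i = (if T i then z i else z' i) then (1:ℂ) else 0) else 1)))) =
        ∏ i, (∑ a' : Fin 2,
        ((if g i = 6 then (if x i = z i then (1:ℂ) else 0) else 1) *
        (if g i = 6 then (if y i = (if T i then a' else z i) then (1:ℂ) else 0) else 1) *
        ((if g i = 6 then (if x' i = a' then (1:ℂ) else 0) else 1) *
         (if g i = 6 then (if y' i = (if T i then z i else a') then (1:ℂ) else 0) else 1)))) := by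
      intro z
      rw [Finset.prod_univ_sum (fun _ => (Finset.univ : Finset (Fin 2)))]
      rw [Fintype.piFinset_univ]
    rw [Finset.sum_congr rfl fun z _ => step1 z]
    rw [Finset.prod_univ_sum (fun _ => (Finset.univ : Finset (Fin 2)))]
    rw [Fintype.piFinset_univ]

lemma swap6 {α : Type*} [Fintype α] (F : α → α → α → α → α → α → ℂ) :
    (∑ z : α, ∑ z' : α, ∑ x : α, ∑ y : α, ∑ x' : α, ∑ y' : α, F z z' x y x' y') =
    ∑ x : α, ∑ y : α, ∑ x' : α, ∑ y' : α, ∑ z : α, ∑ z' : α, F z z' x y x' y' := by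
  rw [m4 Finset.univ Finset.univ Finset.univ Finset.univ Finset.univ
    (fun z z' x y x' => ∑ y', F z z' x y x' y')]
  refine (Finset.sum_congr rfl fun z' _ => Finset.sum_congr rfl fun x _ =>
    Finset.sum_congr rfl fun y _ => Finset.sum_congr rfl fun x' _ => Finset.sum_comm).trans ?_
  rw [m4 Finset.univ Finset.univ Finset.univ Finset.univ Finset.univ
    (fun z' x y x' y' => ∑ z, F z z' x y x' y')]
  exact Finset.sum_congr rfl fun x _ => Finset.sum_congr rfl fun y _ =>
    Finset.sum_congr rfl fun x' _ => Finset.sum_congr rfl fun y' _ => Finset.sum_comm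

lemma stuffF {N : ℕ} (g : Fin N → Fin 7) (b : (Fin N → Fin 2) → ((Fin N → Fin 2) → ℂ))
    (j : Fin N → Fin 2) (T : Fin N → Bool) :
    (4 : ℂ) ^ (N - nMix g) * stuffT g b j T =
    ∑ z : Fin N → Fin 2, ∑ z' : Fin N → Fin 2,
      Ff g b j z * conj (Ff g b j (mrg T z z')) *
        (Ff g b j z' * conj (Ff g b j (mrg T z' z))) := by
  classical
  have hF : ∀ w, Ff g b j w = ∑ x, Gv g b j x * ((DmR g x w : ℝ) : ℂ) := fun w => rfl
  have hFc : ∀ w, conj (Ff g b j w) = ∑ y, conj (Gv g b j y) * ((DmR g y w : ℝ) : ℂ) := by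
    intro w
    rw [hF, map_sum]
    exact Finset.sum_congr rfl fun y _ => by rw [map_mul, Complex.conj_ofReal]
  have hzz : ∀ z z', Ff g b j z * conj (Ff g b j (mrg T z z')) *
      (Ff g b j z' * conj (Ff g b j (mrg T z' z))) =
      ∑ x, ∑ y, ∑ x', ∑ y',
        Gv g b j x * conj (Gv g b j y) * (Gv g b j x' * conj (Gv g b j y')) *
          (((DmR g x z : ℝ) : ℂ) * ((DmR g y (mrg T z z') : ℝ) : ℂ) *
            (((DmR g x' z' : ℝ) : ℂ) * ((DmR g y' (mrg T z' z) : ℝ) : ℂ))) := by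
    intro z z'
    rw [hF z, hFc (mrg T z z'), hF z', hFc (mrg T z' z), sum4]
    exact Finset.sum_congr rfl fun x _ => Finset.sum_congr rfl fun y _ =>
      Finset.sum_congr rfl fun x' _ => Finset.sum_congr rfl fun y' _ => by ring
  simp only [hzz]
  rw [swap6]
  simp only [← Finset.mul_sum]
  rw [show (4 : ℂ) ^ (N - nMix g) * stuffT g b j T =
    ∑ x, ∑ y, ∑ x', ∑ y',
      Gv g b j x * conj (Gv g b j y) * (Gv g b j x' * conj (Gv g b j y')) *
        ((4 : ℂ) ^ (N - nMix g) * dpat g T x y x' y') from by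
      unfold stuffT
      simp only [Finset.mul_sum]
      exact Finset.sum_congr rfl fun x _ => Finset.sum_congr rfl fun y _ =>
        Finset.sum_congr rfl fun x' _ => Finset.sum_congr rfl fun y' _ => by ring]
  exact Finset.sum_congr rfl fun x _ => Finset.sum_congr rfl fun y _ =>
    Finset.sum_congr rfl fun x' _ => Finset.sum_congr rfl fun y' _ => by rw [deltaSum]

lemma DmR_nonneg {N : ℕ} (g : Fin N → Fin 7) (x z : Fin N → Fin 2) : 0 ≤ DmR g x z :=
  Finset.prod_nonneg fun i _ => by split_ifs <;> norm_num

lemma DmR_idem {N : ℕ} (g : Fin N → Fin 7) (x z : Fin N → Fin 2) :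
    DmR g x z * DmR g x z = DmR g x z := by
  unfold DmR
  rw [← Finset.prod_mul_distrib]
  exact Finset.prod_congr rfl fun i _ => by split_ifs <;> norm_num

lemma filter_neg_card {N : ℕ} (g : Fin N → Fin 7) :
    (Finset.univ.filter fun i : Fin N => ¬ g i = 6).card = N - nMix g := by
  have := Finset.card_filter_add_card_filter_not (s := (Finset.univ : Finset (Fin N)))
    (p := fun i => g i = 6)
  simp only [Finset.card_univ, Fintype.card_fin] at this
  unfold nMix
  omega

lemma DmR_sum {N : ℕ} (g : Fin N → Fin 7) (x : Fin N → Fin 2) :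
    ∑ z : Fin N → Fin 2, DmR g x z = 2 ^ (N - nMix g) := by
  classical
  unfold DmR
  rw [show (∑ z : Fin N → Fin 2, ∏ i, (if g i = 6 then (if x i = z i then (1:ℝ) else 0) else 1)) =
      ∏ i, (∑ a : Fin 2, if g i = 6 then (if x i = a then (1:ℝ) else 0) else 1) from by
    rw [Finset.prod_univ_sum (fun _ => (Finset.univ : Finset (Fin 2)))]
    rw [Fintype.piFinset_univ]]
  have hi : ∀ i ∈ Finset.univ, (∑ a : Fin 2, if g i = 6 then (if x i = a then (1:ℝ) else 0) else 1) =
      if g i = 6 then (1:ℝ) else 2 := by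
    intro i _
    by_cases h : g i = 6 <;> simp [h, Finset.sum_ite_eq, Fin.sum_univ_two] <;> norm_num
  rw [Finset.prod_congr rfl hi, Finset.prod_ite, Finset.prod_const, Finset.prod_const]
  simp only [one_pow, one_mul]
  rw [filter_neg_card]

lemma Qnorm1 {N : ℕ} (g : Fin N → Fin 7) (z : Fin N → Fin 2) :
    ∑ x : Fin N → Fin 2, Qv g x * conj (Qv g x) * ((DmR g x z : ℝ) : ℂ) = 1 := by
  classical
  have hterm : ∀ x, Qv g x * conj (Qv g x) * ((DmR g x z : ℝ) : ℂ) =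
      ∏ i, (Qp g i (x i) * conj (Qp g i (x i)) *
        (if g i = 6 then (if x i = z i then (1:ℂ) else 0) else 1)) := by
    intro x
    rw [show (∏ i, (Qp g i (x i) * conj (Qp g i (x i)) *
        (if g i = 6 then (if x i = z i then (1:ℂ) else 0) else 1))) =
        (∏ i, Qp g i (x i)) * (∏ i, conj (Qp g i (x i))) *
        (∏ i, (if g i = 6 then (if x i = z i then (1:ℂ) else 0) else 1)) from by
      rw [Finset.prod_mul_distrib, Finset.prod_mul_distrib]]
    rw [DmR_coe]
    simp [Qv, map_prod]
  simp only [hterm]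
  rw [show (∑ x : Fin N → Fin 2, ∏ i, (Qp g i (x i) * conj (Qp g i (x i)) *
      (if g i = 6 then (if x i = z i then (1:ℂ) else 0) else 1))) =
      ∏ i, (∑ a : Fin 2, Qp g i a * conj (Qp g i a) *
      (if g i = 6 then (if a = z i then (1:ℂ) else 0) else 1)) from by
    rw [Finset.prod_univ_sum (fun _ => (Finset.univ : Finset (Fin 2)))]
    rw [Fintype.piFinset_univ]]
  have hi : ∀ i ∈ Finset.univ, (∑ a : Fin 2, Qp g i a * conj (Qp g i a) *
      (if g i = 6 then (if a = z i then (1:ℂ) else 0) else 1)) = 1 := by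
    intro i _
    by_cases h : g i = 6
    · simp [h, Qp_mixed g i h, Finset.sum_ite_eq']
    · simp only [h, if_false, mul_one]
      exact Qp_norm g i |>.trans (by simp [h])
  rw [Finset.prod_congr rfl hi, Finset.prod_const_one]

lemma m2 {α β γ : Type*} (sa : Finset α) (sb : Finset β) (sc : Finset γ)
    (H : α → β → γ → ℂ) :
    ∑ a ∈ sa, ∑ b ∈ sb, ∑ c ∈ sc, H a b c = ∑ b ∈ sb, ∑ c ∈ sc, ∑ a ∈ sa, H a b c := by
  rw [Finset.sum_comm]
  exact Finset.sum_congr rfl fun b _ => Finset.sum_comm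

lemma diag_sum {α : Type*} [Fintype α] [DecidableEq α] (W : α → α → ℂ) :
    ∑ x : α, ∑ y : α, (if x = y then (1:ℂ) else 0) * W x y = ∑ x : α, W x x := by
  refine Finset.sum_congr rfl fun x _ => ?_
  rw [Finset.sum_eq_single x (fun y _ hy => by simp [Ne.symm hy])
    (fun h => absurd (Finset.mem_univ x) h)]
  simp

lemma sumj_FF {N : ℕ} (g : Fin N → Fin 7) (b : (Fin N → Fin 2) → ((Fin N → Fin 2) → ℂ))
    (hb : ∀ j k, star (b j) ⬝ᵥ b k = if j = k then 1 else 0) (z : Fin N → Fin 2) :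
    ∑ j : Fin N → Fin 2, Ff g b j z * conj (Ff g b j z) = 1 := by
  classical
  have h1 : ∀ j : Fin N → Fin 2, Ff g b j z * conj (Ff g b j z) =
      ∑ x, ∑ y, conj (b j x) * b j y *
        (Qv g x * conj (Qv g y) * (((DmR g x z : ℝ) : ℂ) * ((DmR g y z : ℝ) : ℂ))) := by
    intro j
    have hFc : conj (Ff g b j z) = ∑ y, conj (Gv g b j y) * ((DmR g y z : ℝ) : ℂ) := by
      rw [show Ff g b j z = ∑ x, Gv g b j x * ((DmR g x z : ℝ) : ℂ) from rfl, map_sum]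
      exact Finset.sum_congr rfl fun y _ => by rw [map_mul, Complex.conj_ofReal]
    rw [hFc, show Ff g b j z = ∑ x, Gv g b j x * ((DmR g x z : ℝ) : ℂ) from rfl,
      Finset.sum_mul_sum]
    refine Finset.sum_congr rfl fun x _ => Finset.sum_congr rfl fun y _ => ?_
    simp only [Gv, map_mul, Complex.conj_conj]
    ring
  simp only [h1]
  rw [m2]
  have h2 : ∀ x y : Fin N → Fin 2, (∑ j : Fin N → Fin 2, conj (b j x) * b j y *
      (Qv g x * conj (Qv g y) * (((DmR g x z : ℝ) : ℂ) * ((DmR g y z : ℝ) : ℂ)))) =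
      (if x = y then (1:ℂ) else 0) *
        (Qv g x * conj (Qv g y) * (((DmR g x z : ℝ) : ℂ) * ((DmR g y z : ℝ) : ℂ))) := by
    intro x y
    rw [← Finset.sum_mul, colOrtho b hb]
  simp only [h2]
  rw [diag_sum (fun x y => Qv g x * conj (Qv g y) *
    (((DmR g x z : ℝ) : ℂ) * ((DmR g y z : ℝ) : ℂ)))]
  have h3 : ∀ x, Qv g x * conj (Qv g x) * (((DmR g x z : ℝ) : ℂ) * ((DmR g x z : ℝ) : ℂ)) =
      Qv g x * conj (Qv g x) * ((DmR g x z : ℝ) : ℂ) := by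
    intro x
    rw [← Complex.ofReal_mul, DmR_idem]
  simp only [h3]
  exact Qnorm1 g z

lemma QnormR {N : ℕ} (g : Fin N → Fin 7) (z : Fin N → Fin 2) :
    ∑ x : Fin N → Fin 2, Complex.normSq (Qv g x) * DmR g x z = 1 := by
  have h := Qnorm1 g z
  have h2 : ∀ x : Fin N → Fin 2, Qv g x * conj (Qv g x) * ((DmR g x z : ℝ) : ℂ) =
      ((Complex.normSq (Qv g x) * DmR g x z : ℝ) : ℂ) := by
    intro x
    rw [Complex.mul_conj, ← Complex.ofReal_mul]
  rw [show (1:ℂ) = ((1:ℝ):ℂ) from by norm_num] at h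
  simp only [h2, ← Complex.ofReal_sum] at h
  exact_mod_cast h

lemma sumj_nsqF {N : ℕ} (g : Fin N → Fin 7) (b : (Fin N → Fin 2) → ((Fin N → Fin 2) → ℂ))
    (hb : ∀ j k, star (b j) ⬝ᵥ b k = if j = k then 1 else 0) (z : Fin N → Fin 2) :
    ∑ j : Fin N → Fin 2, Complex.normSq (Ff g b j z) = 1 := by
  have h := sumj_FF g b hb z
  rw [show (1:ℂ) = ((1:ℝ):ℂ) from by norm_num] at h
  simp only [Complex.mul_conj, ← Complex.ofReal_sum] at h
  exact_mod_cast h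

lemma bnorm {N : ℕ} (b : (Fin N → Fin 2) → ((Fin N → Fin 2) → ℂ))
    (hb : ∀ j k, star (b j) ⬝ᵥ b k = if j = k then 1 else 0) (j : Fin N → Fin 2) :
    ∑ x : Fin N → Fin 2, Complex.normSq (b j x) = 1 := by
  have h := hb j j
  simp only [dotProduct, Pi.star_apply, RCLike.star_def, if_pos] at h
  have h2 : ∀ x : Fin N → Fin 2, conj (b j x) * b j x = ((Complex.normSq (b j x) : ℝ) : ℂ) := by
    intro x
    rw [mul_comm, Complex.mul_conj]
  rw [show (1:ℂ) = ((1:ℝ):ℂ) from by norm_num] at h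
  simp only [h2, ← Complex.ofReal_sum] at h
  exact_mod_cast h

lemma FF_CS {N : ℕ} (g : Fin N → Fin 7) (b : (Fin N → Fin 2) → ((Fin N → Fin 2) → ℂ))
    (j z : Fin N → Fin 2) :
    Complex.normSq (Ff g b j z) ≤ ∑ x : Fin N → Fin 2, Complex.normSq (b j x) * DmR g x z := by
  have hnorm : ‖Ff g b j z‖ ≤ ∑ x : Fin N → Fin 2, ‖b j x‖ * ‖Qv g x‖ * DmR g x z := by
    refine (norm_sum_le _ _).trans ?_
    refine Finset.sum_le_sum fun x _ => ?_
    rw [norm_mul, norm_mul, RCLike.norm_conj, Complex.norm_real,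
      Real.norm_of_nonneg (DmR_nonneg g x z)]
  have hCS : (∑ x : Fin N → Fin 2, ‖b j x‖ * ‖Qv g x‖ * DmR g x z) ^ 2 ≤
      (∑ x : Fin N → Fin 2, Complex.normSq (b j x) * DmR g x z) *
      (∑ x : Fin N → Fin 2, Complex.normSq (Qv g x) * DmR g x z) := by
    have h := Finset.sum_mul_sq_le_sq_mul_sq Finset.univ
      (fun x : Fin N → Fin 2 => ‖b j x‖ * DmR g x z) (fun x => ‖Qv g x‖ * DmR g x z)
    have he : ∀ x : Fin N → Fin 2, (‖b j x‖ * DmR g x z) * (‖Qv g x‖ * DmR g x z) =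
        ‖b j x‖ * ‖Qv g x‖ * DmR g x z := by
      intro x
      rw [mul_mul_mul_comm, DmR_idem]
    have hf : ∀ x : Fin N → Fin 2, (‖b j x‖ * DmR g x z) ^ 2 =
        Complex.normSq (b j x) * DmR g x z := by
      intro x
      rw [mul_pow, show DmR g x z ^ 2 = DmR g x z from by rw [sq, DmR_idem],
        Complex.normSq_eq_norm_sq]
    have hg : ∀ x : Fin N → Fin 2, (‖Qv g x‖ * DmR g x z) ^ 2 =
        Complex.normSq (Qv g x) * DmR g x z := by
      intro x
      rw [mul_pow, show DmR g x z ^ 2 = DmR g x z from by rw [sq, DmR_idem],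
        Complex.normSq_eq_norm_sq]
    simp only [he, hf, hg] at h
    exact h
  rw [QnormR, mul_one] at hCS
  have h0 : (0:ℝ) ≤ ‖Ff g b j z‖ := norm_nonneg _
  have h1 : ‖Ff g b j z‖ ^ 2 ≤ (∑ x : Fin N → Fin 2, ‖b j x‖ * ‖Qv g x‖ * DmR g x z) ^ 2 := by
    apply pow_le_pow_left₀ h0 hnorm
  rw [Complex.normSq_eq_norm_sq]
  exact h1.trans hCS

lemma sig_le {N : ℕ} (g : Fin N → Fin 7) (b : (Fin N → Fin 2) → ((Fin N → Fin 2) → ℂ))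
    (hb : ∀ j k, star (b j) ⬝ᵥ b k = if j = k then 1 else 0) (j : Fin N → Fin 2) :
    ∑ z : Fin N → Fin 2, Complex.normSq (Ff g b j z) ≤ 2 ^ (N - nMix g) := by
  have h1 : ∑ z : Fin N → Fin 2, Complex.normSq (Ff g b j z) ≤
      ∑ z : Fin N → Fin 2, ∑ x : Fin N → Fin 2, Complex.normSq (b j x) * DmR g x z :=
    Finset.sum_le_sum fun z _ => FF_CS g b j z
  rw [Finset.sum_comm] at h1
  have h2 : ∀ x : Fin N → Fin 2, (∑ z : Fin N → Fin 2, Complex.normSq (b j x) * DmR g x z) =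
      Complex.normSq (b j x) * 2 ^ (N - nMix g) := by
    intro x
    rw [← Finset.mul_sum, DmR_sum]
  simp only [h2] at h1
  rw [← Finset.sum_mul, bnorm b hb j, one_mul] at h1
  exact h1

def mrgEquiv {N : ℕ} (T : Fin N → Bool) :
    ((Fin N → Fin 2) × (Fin N → Fin 2)) ≃ ((Fin N → Fin 2) × (Fin N → Fin 2)) where
  toFun p := (mrg T p.1 p.2, mrg T p.2 p.1)
  invFun p := (mrg T p.1 p.2, mrg T p.2 p.1)
  left_inv p := by
    ext i <;> simp [mrg] <;> cases h : T i <;> simp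
  right_inv p := by
    ext i <;> simp [mrg] <;> cases h : T i <;> simp

lemma mrg_sum {N : ℕ} (T : Fin N → Bool) (h : (Fin N → Fin 2) → ℝ) :
    (∑ z : Fin N → Fin 2, ∑ z' : Fin N → Fin 2, h (mrg T z z') * h (mrg T z' z)) =
    ∑ z : Fin N → Fin 2, ∑ z' : Fin N → Fin 2, h z * h z' := by
  calc (∑ z : Fin N → Fin 2, ∑ z' : Fin N → Fin 2, h (mrg T z z') * h (mrg T z' z))
      = ∑ p : (Fin N → Fin 2) × (Fin N → Fin 2), h (mrg T p.1 p.2) * h (mrg T p.2 p.1) :=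
        (Fintype.sum_prod_type
          (fun p : (Fin N → Fin 2) × (Fin N → Fin 2) => h (mrg T p.1 p.2) * h (mrg T p.2 p.1))).symm
    _ = ∑ p : (Fin N → Fin 2) × (Fin N → Fin 2), h p.1 * h p.2 :=
        Fintype.sum_equiv (mrgEquiv T)
          (fun p => h (mrg T p.1 p.2) * h (mrg T p.2 p.1)) (fun p => h p.1 * h p.2)
          (fun p => rfl)
    _ = ∑ z : Fin N → Fin 2, ∑ z' : Fin N → Fin 2, h z * h z' :=
        Fintype.sum_prod_type (fun p : (Fin N → Fin 2) × (Fin N → Fin 2) => h p.1 * h p.2)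

lemma re_term_le (a bb c d : ℂ) :
    (a * conj bb * (c * conj d)).re ≤
      (Complex.normSq a * Complex.normSq c + Complex.normSq bb * Complex.normSq d) / 2 := by
  have h1 : (a * conj bb * (c * conj d)).re ≤ ‖a * conj bb * (c * conj d)‖ := by
    exact Complex.re_le_norm _
  have h2 : ‖a * conj bb * (c * conj d)‖ = ‖a‖ * ‖bb‖ * (‖c‖ * ‖d‖) := by
    rw [norm_mul, norm_mul, norm_mul, RCLike.norm_conj, RCLike.norm_conj]
  rw [h2] at h1
  have hnsq : ∀ w : ℂ, Complex.normSq w = ‖w‖ ^ 2 := fun w => by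
    rw [Complex.normSq_eq_norm_sq]
  rw [hnsq, hnsq, hnsq, hnsq]
  nlinarith [sq_nonneg (‖a‖ * ‖c‖ - ‖bb‖ * ‖d‖), norm_nonneg a, norm_nonneg bb,
    norm_nonneg c, norm_nonneg d, mul_nonneg (norm_nonneg a) (norm_nonneg c),
    mul_nonneg (norm_nonneg bb) (norm_nonneg d)]

lemma re_stuffT_le {N : ℕ} (g : Fin N → Fin 7) (b : (Fin N → Fin 2) → ((Fin N → Fin 2) → ℂ))
    (j : Fin N → Fin 2) (T : Fin N → Bool) :
    (4:ℝ) ^ (N - nMix g) * (stuffT g b j T).re ≤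
      (∑ z : Fin N → Fin 2, Complex.normSq (Ff g b j z)) ^ 2 := by
  have h := stuffF g b j T
  have hre : ((4:ℂ) ^ (N - nMix g) * stuffT g b j T).re =
      (4:ℝ) ^ (N - nMix g) * (stuffT g b j T).re := by
    rw [show ((4:ℂ) ^ (N - nMix g)) = (((4:ℝ) ^ (N - nMix g) : ℝ) : ℂ) from by push_cast; ring]
    rw [Complex.re_ofReal_mul]
  rw [← hre, h, Complex.re_sum]
  have hbound : ∀ z : Fin N → Fin 2, (∑ z' : Fin N → Fin 2,
      Ff g b j z * conj (Ff g b j (mrg T z z')) *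
        (Ff g b j z' * conj (Ff g b j (mrg T z' z)))).re ≤
      ∑ z' : Fin N → Fin 2,
        (Complex.normSq (Ff g b j z) * Complex.normSq (Ff g b j z') +
         Complex.normSq (Ff g b j (mrg T z z')) * Complex.normSq (Ff g b j (mrg T z' z))) / 2 := by
    intro z
    rw [Complex.re_sum]
    exact Finset.sum_le_sum fun z' _ => re_term_le _ _ _ _
  refine (Finset.sum_le_sum fun z _ => hbound z).trans ?_
  rw [show (∑ z : Fin N → Fin 2, ∑ z' : Fin N → Fin 2,
      (Complex.normSq (Ff g b j z) * Complex.normSq (Ff g b j z') +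
       Complex.normSq (Ff g b j (mrg T z z')) * Complex.normSq (Ff g b j (mrg T z' z))) / 2) =
      (∑ z : Fin N → Fin 2, ∑ z' : Fin N → Fin 2,
        Complex.normSq (Ff g b j z) * Complex.normSq (Ff g b j z')) / 2 +
      (∑ z : Fin N → Fin 2, ∑ z' : Fin N → Fin 2,
        Complex.normSq (Ff g b j (mrg T z z')) * Complex.normSq (Ff g b j (mrg T z' z))) / 2 from by
    simp only [add_div, Finset.sum_add_distrib, Finset.sum_div]]
  rw [mrg_sum T (fun z => Complex.normSq (Ff g b j z))]
  rw [show (∑ z : Fin N → Fin 2, ∑ z' : Fin N → Fin 2,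
      Complex.normSq (Ff g b j z) * Complex.normSq (Ff g b j z')) =
      (∑ z : Fin N → Fin 2, Complex.normSq (Ff g b j z)) ^ 2 from by
    rw [sq, Finset.sum_mul_sum]]
  linarith



/-- For any `ρ ∈ S^+` and any orthonormal basis `{|j⟩}` of `(ℂ²)^{⊗N}`, the average over
the states `|ψ⟩ ∈ S_ρ` of `Σ_j |⟨j|ψ⟩|⁴` is at most `(2/3)^{n(ρ)}`. -/
theorem average_inverse_effective_dimension_over_Srho_le (N : ℕ) (g : Fin N → Fin 7)
    (b : (Fin N → Fin 2) → ((Fin N → Fin 2) → ℂ))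
    (hb : ∀ j k, star (b j) ⬝ᵥ b k = if j = k then 1 else 0) :
    ((Srho g).card : ℝ)⁻¹ *
        ∑ f ∈ Srho g, ∑ j : Fin N → Fin 2, ‖star (b j) ⬝ᵥ prodState f‖ ^ 4
      ≤ (2 / 3 : ℝ) ^ nMix g := by
  classical
  have hmn : nMix g ≤ N := nMix_le g
  have hnorm4 : ∀ (f : Fin N → Fin 6) (j : Fin N → Fin 2),
      ‖star (b j) ⬝ᵥ prodState f‖ ^ 4 =
      ((star (b j) ⬝ᵥ prodState f) * conj (star (b j) ⬝ᵥ prodState f) *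
       ((star (b j) ⬝ᵥ prodState f) * conj (star (b j) ⬝ᵥ prodState f))).re := by
    intro f j
    set d := star (b j) ⬝ᵥ prodState f with hd
    rw [Complex.mul_conj, ← Complex.ofReal_mul, Complex.ofReal_re,
      Complex.normSq_eq_norm_sq]
    ring
  have hsig : ∀ j, (0:ℝ) ≤ ∑ z : Fin N → Fin 2, Complex.normSq (Ff g b j z) :=
    fun j => Finset.sum_nonneg fun z _ => Complex.normSq_nonneg _
  have hsigsum : ∑ j : Fin N → Fin 2, (∑ z : Fin N → Fin 2, Complex.normSq (Ff g b j z)) =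
      2 ^ N := by
    rw [Finset.sum_comm]
    have : ∀ z : Fin N → Fin 2, ∑ j : Fin N → Fin 2, Complex.normSq (Ff g b j z) = 1 :=
      sumj_nsqF g b hb
    simp only [this]
    rw [Finset.sum_const, Finset.card_univ]
    simp [Fintype.card_fun]
  have hT : ∀ T : Fin N → Bool,
      ∑ j : Fin N → Fin 2, (stuffT g b j T).re ≤ 2 ^ nMix g := by
    intro T
    have h1 : (4:ℝ) ^ (N - nMix g) * ∑ j : Fin N → Fin 2, (stuffT g b j T).re ≤
        ∑ j : Fin N → Fin 2, (∑ z : Fin N → Fin 2, Complex.normSq (Ff g b j z)) ^ 2 := by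
      rw [Finset.mul_sum]
      exact Finset.sum_le_sum fun j _ => re_stuffT_le g b j T
    have h2 : (∑ j : Fin N → Fin 2, (∑ z : Fin N → Fin 2, Complex.normSq (Ff g b j z)) ^ 2) ≤
        2 ^ (N - nMix g) * 2 ^ N := by
      calc (∑ j : Fin N → Fin 2, (∑ z : Fin N → Fin 2, Complex.normSq (Ff g b j z)) ^ 2)
          ≤ ∑ j : Fin N → Fin 2, (2:ℝ) ^ (N - nMix g) *
              (∑ z : Fin N → Fin 2, Complex.normSq (Ff g b j z)) := by
            refine Finset.sum_le_sum fun j _ => ?_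
            rw [sq]
            exact mul_le_mul_of_nonneg_right (sig_le g b hb j) (hsig j)
        _ = 2 ^ (N - nMix g) * 2 ^ N := by rw [← Finset.mul_sum, hsigsum]
    have h3 : (2:ℝ) ^ (N - nMix g) * 2 ^ N = (4:ℝ) ^ (N - nMix g) * 2 ^ nMix g := by
      rw [show (4:ℝ) = 2 * 2 from by norm_num, mul_pow, mul_assoc, ← pow_add, ← pow_add,
        ← pow_add]
      congr 1
      omega
    have h4 : (0:ℝ) < 4 ^ (N - nMix g) := by positivity
    have := h1.trans (h2.trans_eq h3)
    exact le_of_mul_le_mul_left this h4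
  have hmain : (∑ f ∈ Srho g, ∑ j : Fin N → Fin 2, ‖star (b j) ⬝ᵥ prodState f‖ ^ 4) ≤
      2 ^ nMix g * 2 ^ nMix g := by
    calc (∑ f ∈ Srho g, ∑ j : Fin N → Fin 2, ‖star (b j) ⬝ᵥ prodState f‖ ^ 4)
        = ∑ j : Fin N → Fin 2, ∑ f ∈ Srho g,
            ((star (b j) ⬝ᵥ prodState f) * conj (star (b j) ⬝ᵥ prodState f) *
             ((star (b j) ⬝ᵥ prodState f) * conj (star (b j) ⬝ᵥ prodState f))).re := by
          simp only [hnorm4]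
          exact Finset.sum_comm
      _ = ∑ j : Fin N → Fin 2, ∑ T ∈ Fintype.piFinset (usel g), (stuffT g b j T).re := by
          refine Finset.sum_congr rfl fun j _ => ?_
          rw [← Complex.re_sum, expand g b j, Complex.re_sum]
      _ = ∑ T ∈ Fintype.piFinset (usel g), ∑ j : Fin N → Fin 2, (stuffT g b j T).re :=
          Finset.sum_comm
      _ ≤ ∑ T ∈ Fintype.piFinset (usel g), (2:ℝ) ^ nMix g :=
          Finset.sum_le_sum fun T _ => hT T
      _ = 2 ^ nMix g * 2 ^ nMix g := by
          rw [Finset.sum_const, card_piu, nsmul_eq_mul]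
          push_cast
          ring
  rw [card_Srho]
  have h6 : (0:ℝ) ≤ ((6:ℕ) ^ nMix g : ℝ)⁻¹ := by positivity
  calc ((6 ^ nMix g : ℕ) : ℝ)⁻¹ *
        ∑ f ∈ Srho g, ∑ j : Fin N → Fin 2, ‖star (b j) ⬝ᵥ prodState f‖ ^ 4
      ≤ ((6 ^ nMix g : ℕ) : ℝ)⁻¹ * (2 ^ nMix g * 2 ^ nMix g) := by
        apply mul_le_mul_of_nonneg_left hmain
        positivity
    _ = (2 / 3 : ℝ) ^ nMix g := by
        push_cast
        rw [div_pow, show (2:ℝ)^nMix g * 2^nMix g = (4:ℝ)^nMix g from by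
          rw [← mul_pow]; norm_num]
        rw [show (4:ℝ)^nMix g = (2:ℝ)^nMix g * (2:ℝ)^nMix g from by rw [← mul_pow]; norm_num]
        rw [show (6:ℝ)^nMix g = (2:ℝ)^nMix g * (3:ℝ)^nMix g from by rw [← mul_pow]; norm_num]
        have h2 : (0:ℝ) < 2^nMix g := by positivity
        have h3 : (0:ℝ) < 3^nMix g := by positivity
        field_simp
end

section
/- Let ρ ∈ S^+, let A be the set of qubits on which ρ is a pure state (not I₂/2), and let |φ⟩_A be the corresponding pure product state of the qubits in A. Then for every unit vector |j⟩ ∈ (ℂ²)^{⊗N}, Σ_{|ψ⟩∈S_ρ} |⟨j|ψ⟩|⁴ ≤ 2^{n(ρ)} ⟨j| (|φ⟩_A⟨φ|_A ⊗ I_Ā) |j⟩, where I_Ā is the identity operator on the remaining qubits. -/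
open scoped Matrix ComplexConjugate

/-- The operator `|φ⟩_A⟨φ|_A ⊗ I_Ā`, where `A` is the set of qubits on which `ρ ∈ S^+` is
pure (not `I₂/2`), `|φ⟩_A` is the corresponding pure product state of the qubits in `A`,
and `I_Ā` is the identity on the remaining qubits. -/
noncomputable def pureProjA {N : ℕ} (g : Fin N → Fin 7) :
    Matrix (Fin N → Fin 2) (Fin N → Fin 2) ℂ :=
  Matrix.of fun x y => ∏ i,
    if g i = 6 then (if x i = y i then (1 : ℂ) else 0) else qsDM (g i) (x i) (y i)

section aux

open Finset

noncomputable def ent : Option (Fin 6) → Fin 2 → Fin 2 → ℂ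
  | some k => fun a b => qs k a * conj (qs k b)
  | none => fun a b => if a = b then 1 else 0

noncomputable def entW : Option (Fin 6) → Fin 2 → Fin 2 → ℂ
  | some k => fun z a => if z = 0 then conj (qs k a) else 0
  | none => fun z a => if z = a then 1 else 0

lemma ent_gram (o : Option (Fin 6)) (a b : Fin 2) :
    ent o a b = ∑ z, conj (entW o z a) * entW o z b := by
  cases o with
  | none =>
      fin_cases a <;> fin_cases b <;>
        simp [ent, entW, Fin.sum_univ_two]
  | some k =>
      simp [ent, entW, Fin.sum_univ_two]

lemma ent_herm (o : Option (Fin 6)) (a b : Fin 2) :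
    ent o b a = conj (ent o a b) := by
  cases o with
  | none => by_cases h : a = b <;> simp [ent, h, eq_comm]
  | some k => simp only [ent, map_mul, Complex.conj_conj]; ring

end aux
open Finset

lemma sum_comm3 {M : Type*} [AddCommMonoid M] {α β γ : Type*} [Fintype α] [Fintype β] [Fintype γ]
    (f : α → β → γ → M) :
    ∑ x : α, ∑ y : β, ∑ z : γ, f x y z = ∑ z : γ, ∑ x : α, ∑ y : β, f x y z := by
  calc ∑ x : α, ∑ y : β, ∑ z : γ, f x y z
      = ∑ x : α, ∑ z : γ, ∑ y : β, f x y z := Finset.sum_congr rfl fun x _ => Finset.sum_comm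
    _ = ∑ z : γ, ∑ x : α, ∑ y : β, f x y z := Finset.sum_comm

lemma sum_comm4 {M : Type*} [AddCommMonoid M] {α β γ δ : Type*} [Fintype α] [Fintype β]
    [Fintype γ] [Fintype δ] (f : α → β → γ → δ → M) :
    ∑ x : α, ∑ y : β, ∑ a : γ, ∑ b : δ, f x y a b
      = ∑ a : γ, ∑ b : δ, ∑ x : α, ∑ y : β, f x y a b := by
  calc ∑ x : α, ∑ y : β, ∑ a : γ, ∑ b : δ, f x y a b
      = ∑ x : α, ∑ a : γ, ∑ y : β, ∑ b : δ, f x y a b :=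
        Finset.sum_congr rfl fun x _ => Finset.sum_comm
    _ = ∑ a : γ, ∑ x : α, ∑ y : β, ∑ b : δ, f x y a b := Finset.sum_comm
    _ = ∑ a : γ, ∑ x : α, ∑ b : δ, ∑ y : β, f x y a b :=
        Finset.sum_congr rfl fun a _ => Finset.sum_congr rfl fun x _ => Finset.sum_comm
    _ = ∑ a : γ, ∑ b : δ, ∑ x : α, ∑ y : β, f x y a b :=
        Finset.sum_congr rfl fun a _ => Finset.sum_comm

lemma gram_eval {N : ℕ} (m w : Fin N → Fin 2 → Fin 2 → ℂ)
    (h : ∀ i a b, m i a b = ∑ z, conj (w i z a) * w i z b)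
    (u : (Fin N → Fin 2) → ℂ) :
    ∑ x, ∑ y, conj (u x) * (∏ i, m i (x i) (y i)) * u y
      = ∑ z : Fin N → Fin 2,
          (Complex.normSq (∑ x, (∏ i, w i (z i) (x i)) * u x) : ℂ) := by
  have key : ∀ x y : Fin N → Fin 2, (∏ i, m i (x i) (y i))
      = ∑ z : Fin N → Fin 2,
          conj (∏ i, w i (z i) (x i)) * (∏ i, w i (z i) (y i)) := by
    intro x y
    simp_rw [h]
    rw [Fintype.prod_sum (fun i z => conj (w i z (x i)) * w i z (y i))]
    refine Finset.sum_congr rfl fun z _ => ?_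
    rw [Finset.prod_mul_distrib, map_prod]
  calc ∑ x, ∑ y, conj (u x) * (∏ i, m i (x i) (y i)) * u y
      = ∑ x, ∑ y, ∑ z : Fin N → Fin 2,
          (conj ((∏ i, w i (z i) (x i)) * u x)) * ((∏ i, w i (z i) (y i)) * u y) := by
        refine Finset.sum_congr rfl fun x _ => Finset.sum_congr rfl fun y _ => ?_
        rw [key, Finset.mul_sum, Finset.sum_mul]
        refine Finset.sum_congr rfl fun z _ => ?_
        rw [map_mul]; ring
    _ = ∑ z : Fin N → Fin 2, ∑ x, ∑ y,
          (conj ((∏ i, w i (z i) (x i)) * u x)) * ((∏ i, w i (z i) (y i)) * u y) :=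
        sum_comm3 _
    _ = ∑ z : Fin N → Fin 2,
          (Complex.normSq (∑ x, (∏ i, w i (z i) (x i)) * u x) : ℂ) := by
        refine Finset.sum_congr rfl fun z _ => ?_
        rw [← Finset.sum_mul_sum, ← map_sum, ← Complex.normSq_eq_conj_mul_self]

section core
open Finset Complex

variable {N : ℕ} (j : (Fin N → Fin 2) → ℂ)

noncomputable def Qd (σ : Fin N → Option (Fin 6)) : ℂ :=
  ∑ x, ∑ y, conj (j x) * (∏ i, ent (σ i) (x i) (y i)) * j y

noncomputable def Bq (σ : Fin N → Option (Fin 6)) (i₀ : Fin N) (a b : Fin 2) : ℂ :=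
  ∑ x, ∑ y, (if x i₀ = a then conj (j x) else 0) *
    (∏ i ∈ Finset.univ.erase i₀, ent (σ i) (x i) (y i)) * (if y i₀ = b then j y else 0)

lemma Qd_real (σ : Fin N → Option (Fin 6)) :
    ∃ t : ℝ, 0 ≤ t ∧ Qd j σ = (t : ℂ) := by
  have := gram_eval (fun i => ent (σ i)) (fun i => entW (σ i))
    (fun i a b => ent_gram (σ i) a b) j
  refine ⟨∑ z : Fin N → Fin 2,
    Complex.normSq (∑ x, (∏ i, entW (σ i) (z i) (x i)) * j x), ?_, ?_⟩
  · exact Finset.sum_nonneg fun z _ => Complex.normSq_nonneg _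
  · rw [Qd, this, Complex.ofReal_sum]

lemma Qd_update (σ : Fin N → Option (Fin 6)) (i₀ : Fin N) (o : Option (Fin 6)) :
    Qd j (Function.update σ i₀ o) = ∑ a, ∑ b, ent o a b * Bq j σ i₀ a b := by
  have hpt : ∀ x y : Fin N → Fin 2,
      conj (j x) * (∏ i, ent (Function.update σ i₀ o i) (x i) (y i)) * j y
      = ∑ a, ∑ b, ent o a b * ((if x i₀ = a then conj (j x) else 0) *
          (∏ i ∈ Finset.univ.erase i₀, ent (σ i) (x i) (y i)) * (if y i₀ = b then j y else 0)) := by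
    intro x y
    have hprod : (∏ i, ent (Function.update σ i₀ o i) (x i) (y i))
        = ent o (x i₀) (y i₀) * ∏ i ∈ Finset.univ.erase i₀, ent (σ i) (x i) (y i) := by
      rw [← Finset.mul_prod_erase _ _ (Finset.mem_univ i₀), Function.update_self]
      congr 1
      exact Finset.prod_congr rfl fun i hi =>
        by rw [Function.update_of_ne (Finset.ne_of_mem_erase hi)]
    rw [hprod]
    simp only [mul_ite, ite_mul, mul_zero, zero_mul, Finset.sum_ite_eq, Finset.mem_univ, if_true]
    ring
  calc Qd j (Function.update σ i₀ o)
      = ∑ x, ∑ y, ∑ a, ∑ b, ent o a b * ((if x i₀ = a then conj (j x) else 0) *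
          (∏ i ∈ Finset.univ.erase i₀, ent (σ i) (x i) (y i)) * (if y i₀ = b then j y else 0)) := by
        rw [Qd]
        exact Finset.sum_congr rfl fun x _ => Finset.sum_congr rfl fun y _ => hpt x y
    _ = ∑ a, ∑ b, ∑ x, ∑ y, ent o a b * ((if x i₀ = a then conj (j x) else 0) *
          (∏ i ∈ Finset.univ.erase i₀, ent (σ i) (x i) (y i)) * (if y i₀ = b then j y else 0)) :=
        sum_comm4 _
    _ = ∑ a, ∑ b, ent o a b * Bq j σ i₀ a b := by
        refine Finset.sum_congr rfl fun a _ => Finset.sum_congr rfl fun b _ => ?_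
        rw [Bq, Finset.mul_sum]
        exact Finset.sum_congr rfl fun x _ => by rw [Finset.mul_sum]

lemma Bq_update (σ : Fin N → Option (Fin 6)) (i₀ : Fin N) (o : Option (Fin 6)) (a b : Fin 2) :
    Bq j (Function.update σ i₀ o) i₀ a b = Bq j σ i₀ a b := by
  unfold Bq
  refine Finset.sum_congr rfl fun x _ => Finset.sum_congr rfl fun y _ => ?_
  congr 1
  congr 1
  exact Finset.prod_congr rfl fun i hi =>
    by rw [Function.update_of_ne (Finset.ne_of_mem_erase hi)]

end core

section core2
open Finset Complex

variable {N : ℕ} (j : (Fin N → Fin 2) → ℂ)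

lemma Bq_herm (σ : Fin N → Option (Fin 6)) (i₀ : Fin N) (a b : Fin 2) :
    Bq j σ i₀ b a = conj (Bq j σ i₀ a b) := by
  have expand : conj (Bq j σ i₀ a b) = ∑ x, ∑ y, (if x i₀ = a then j x else 0) *
      (∏ i ∈ Finset.univ.erase i₀, ent (σ i) (y i) (x i)) *
      (if y i₀ = b then conj (j y) else 0) := by
    rw [Bq, map_sum]
    refine Finset.sum_congr rfl fun x _ => ?_
    rw [map_sum]
    refine Finset.sum_congr rfl fun y _ => ?_
    rw [map_mul, map_mul, map_prod]
    congr 1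
    · congr 1
      · split <;> simp
      · exact Finset.prod_congr rfl fun i _ => (ent_herm _ _ _).symm
    · split <;> simp
  rw [expand, Bq, Finset.sum_comm]
  refine Finset.sum_congr rfl fun x _ => Finset.sum_congr rfl fun y _ => ?_
  ring

lemma Bq_psd (σ : Fin N → Option (Fin 6)) (i₀ : Fin N) (v : Fin 2 → ℂ) :
    ∃ t : ℝ, 0 ≤ t ∧ ∑ a, ∑ b, conj (v a) * Bq j σ i₀ a b * v b = (t : ℂ) := by
  classical
  set m : Fin N → Fin 2 → Fin 2 → ℂ :=
    fun i => if i = i₀ then (fun _ _ => 1) else ent (σ i) with hm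
  set w : Fin N → Fin 2 → Fin 2 → ℂ :=
    fun i => if i = i₀ then (fun z _ => if z = 0 then 1 else 0) else entW (σ i) with hw
  have hmw : ∀ i a b, m i a b = ∑ z, conj (w i z a) * w i z b := by
    intro i a b
    by_cases h : i = i₀
    · subst h; simp [hm, hw, Fin.sum_univ_two]
    · simp only [hm, hw, if_neg h]; exact ent_gram _ _ _
  set u : (Fin N → Fin 2) → ℂ := fun x => v (x i₀) * j x with hu
  have hprod : ∀ x y : Fin N → Fin 2, (∏ i, m i (x i) (y i))
      = ∏ i ∈ Finset.univ.erase i₀, ent (σ i) (x i) (y i) := by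
    intro x y
    rw [← Finset.mul_prod_erase _ _ (Finset.mem_univ i₀)]
    have h1 : m i₀ (x i₀) (y i₀) = 1 := by simp [hm]
    rw [h1, one_mul]
    exact Finset.prod_congr rfl fun i hi => by
      simp [hm, Finset.ne_of_mem_erase hi]
  have hform : ∑ a, ∑ b, conj (v a) * Bq j σ i₀ a b * v b
      = ∑ x, ∑ y, conj (u x) * (∏ i, m i (x i) (y i)) * u y := by
    calc ∑ a, ∑ b, conj (v a) * Bq j σ i₀ a b * v b
        = ∑ a, ∑ b, ∑ x, ∑ y, conj (v a) * ((if x i₀ = a then conj (j x) else 0) *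
            (∏ i ∈ Finset.univ.erase i₀, ent (σ i) (x i) (y i)) *
            (if y i₀ = b then j y else 0)) * v b := by
          refine Finset.sum_congr rfl fun a _ => Finset.sum_congr rfl fun b _ => ?_
          rw [Bq, Finset.mul_sum, Finset.sum_mul]
          refine Finset.sum_congr rfl fun x _ => ?_
          rw [Finset.mul_sum, Finset.sum_mul]
      _ = ∑ x, ∑ y, ∑ a, ∑ b, conj (v a) * ((if x i₀ = a then conj (j x) else 0) *
            (∏ i ∈ Finset.univ.erase i₀, ent (σ i) (x i) (y i)) *
            (if y i₀ = b then j y else 0)) * v b := (sum_comm4 _).symm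
      _ = ∑ x, ∑ y, conj (u x) * (∏ i, m i (x i) (y i)) * u y := by
          refine Finset.sum_congr rfl fun x _ => Finset.sum_congr rfl fun y _ => ?_
          rw [hprod]
          simp only [mul_ite, ite_mul, mul_zero, zero_mul, Finset.sum_ite_eq,
            Finset.mem_univ, if_true]
          simp only [hu, map_mul]
          ring
  refine ⟨∑ z : Fin N → Fin 2,
    Complex.normSq (∑ x, (∏ i, w i (z i) (x i)) * u x), ?_, ?_⟩
  · exact Finset.sum_nonneg fun z _ => Complex.normSq_nonneg _
  · rw [hform, gram_eval m w hmw u, Complex.ofReal_sum]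

end core2

section vals
open Finset Complex

noncomputable def entv : Fin 6 → Fin 2 → Fin 2 → ℂ
  | 0 => ![![1/2, 1/2], ![1/2, 1/2]]
  | 1 => ![![1/2, -(1/2)], ![-(1/2), 1/2]]
  | 2 => ![![1/2, -(Complex.I/2)], ![Complex.I/2, 1/2]]
  | 3 => ![![1/2, Complex.I/2], ![-(Complex.I/2), 1/2]]
  | 4 => ![![1, 0], ![0, 0]]
  | 5 => ![![0, 0], ![0, 1]]

lemma ent_some_eq (k : Fin 6) (a b : Fin 2) : ent (some k) a b = entv k a b := by
  have h2 : ((Real.sqrt 2 : ℝ) : ℂ) * ((Real.sqrt 2 : ℝ) : ℂ) = 2 := by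
    rw [← Complex.ofReal_mul]
    norm_num [Real.mul_self_sqrt]
  have hpos : (0:ℝ) < Real.sqrt 2 := Real.sqrt_pos.mpr (by norm_num)
  have hne : ((Real.sqrt 2 : ℝ) : ℂ) ≠ 0 := by exact_mod_cast hpos.ne'
  have hinv : ((Real.sqrt 2 : ℝ) : ℂ)⁻¹ * ((Real.sqrt 2 : ℝ) : ℂ)⁻¹ = 1/2 := by
    rw [← mul_inv, h2]
    norm_num
  fin_cases k <;> fin_cases a <;> fin_cases b <;>
    simp [ent, qs, entv, map_inv₀, Complex.conj_ofReal, Complex.conj_I] <;>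
    ring_nf <;>
    simp [pow_two, hinv] <;> ring

end vals

section perqubit
open Finset Complex

variable {N : ℕ}

lemma qd_vals (j : (Fin N → Fin 2) → ℂ) (σ : Fin N → Option (Fin 6)) (i₀ : Fin N) :
    ∃ p r cre cim : ℝ,
      0 ≤ p ∧ 0 ≤ r ∧ cre^2 + cim^2 ≤ p * r ∧
      (Qd j (Function.update σ i₀ none)).re = p + r ∧
      (Qd j (Function.update σ i₀ (some 0))).re = (p + r)/2 + cre ∧
      (Qd j (Function.update σ i₀ (some 1))).re = (p + r)/2 - cre ∧
      (Qd j (Function.update σ i₀ (some 2))).re = (p + r)/2 + cim ∧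
      (Qd j (Function.update σ i₀ (some 3))).re = (p + r)/2 - cim ∧
      (Qd j (Function.update σ i₀ (some 4))).re = p ∧
      (Qd j (Function.update σ i₀ (some 5))).re = r := by
  obtain ⟨p, hp0, hB00⟩ := Bq_psd j σ i₀ ![1, 0]
  obtain ⟨r, hr0, hB11⟩ := Bq_psd j σ i₀ ![0, 1]
  simp only [Fin.sum_univ_two, Matrix.cons_val_zero, Matrix.cons_val_one, Matrix.head_cons,
    map_one, map_zero, one_mul, mul_one, zero_mul, mul_zero, add_zero, zero_add] at hB00 hB11
  have hherm := Bq_herm j σ i₀ 0 1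
  set c := Bq j σ i₀ 0 1 with hc
  have hnc : c * conj c = (normSq c : ℂ) := Complex.mul_conj c
  have hq : ∀ t : ℝ, 0 ≤ p * (t*t) + (-(2*normSq c))*t + normSq c * r := by
    intro t
    obtain ⟨s, hs0, hs⟩ := Bq_psd j σ i₀ ![(t:ℂ), -conj c]
    simp only [Fin.sum_univ_two, Matrix.cons_val_zero, Matrix.cons_val_one,
      Matrix.head_cons] at hs
    rw [hB00, hB11, hherm, ← hc] at hs
    have heq : ((p * (t*t) - 2*normSq c*t + normSq c * r : ℝ) : ℂ) = (s : ℂ) := by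
      rw [← hs]
      simp only [map_neg, Complex.conj_conj, Complex.conj_ofReal]
      push_cast
      linear_combination (2*(t:ℂ) - (r:ℂ)) * hnc
    have := Complex.ofReal_inj.mp heq
    nlinarith [hs0, this]
  have hdisc := discrim_le_zero hq
  rw [discrim] at hdisc
  have hdet : normSq c ≤ p * r := by
    rcases (Complex.normSq_nonneg c).eq_or_lt with h0 | h0
    · rw [← h0]; exact mul_nonneg hp0 hr0
    · nlinarith [hdisc, h0]
  have hval : ∀ o, Qd j (Function.update σ i₀ o)
      = ent o 0 0 * (p:ℂ) + ent o 0 1 * c + ent o 1 0 * conj c + ent o 1 1 * (r:ℂ) := by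
    intro o
    rw [Qd_update]
    simp only [Fin.sum_univ_two]
    rw [hB00, hB11, hherm, ← hc]
    ring
  have hcc : c + conj c = ((2 * c.re : ℝ) : ℂ) := Complex.add_conj c
  have hsc : c - conj c = ((2 * c.im : ℝ) : ℂ) * Complex.I := Complex.sub_conj c
  push_cast at hcc hsc
  refine ⟨p, r, c.re, c.im, hp0, hr0, ?_, ?_, ?_, ?_, ?_, ?_, ?_, ?_⟩
  · calc c.re^2 + c.im^2 = normSq c := by rw [Complex.normSq_apply]; ring
      _ ≤ p * r := hdet
  · have : Qd j (Function.update σ i₀ none) = ((p + r : ℝ) : ℂ) := by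
      rw [hval]; simp only [ent]; push_cast; norm_num
    rw [this, Complex.ofReal_re]
  · have : Qd j (Function.update σ i₀ (some 0)) = (((p + r)/2 + c.re : ℝ) : ℂ) := by
      rw [hval]
      simp only [ent_some_eq, entv, Matrix.cons_val_zero, Matrix.cons_val_one, Matrix.head_cons]
      push_cast
      linear_combination (1/2 : ℂ) * hcc
    rw [this, Complex.ofReal_re]
  · have : Qd j (Function.update σ i₀ (some 1)) = (((p + r)/2 - c.re : ℝ) : ℂ) := by
      rw [hval]
      simp only [ent_some_eq, entv, Matrix.cons_val_zero, Matrix.cons_val_one, Matrix.head_cons]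
      push_cast
      linear_combination (-1/2 : ℂ) * hcc
    rw [this, Complex.ofReal_re]
  · have : Qd j (Function.update σ i₀ (some 2)) = (((p + r)/2 + c.im : ℝ) : ℂ) := by
      rw [hval]
      simp only [ent_some_eq, entv, Matrix.cons_val_zero, Matrix.cons_val_one, Matrix.head_cons]
      push_cast
      linear_combination (-(Complex.I)/2) * hsc + (-(c.im : ℂ)) * Complex.I_sq
    rw [this, Complex.ofReal_re]
  · have : Qd j (Function.update σ i₀ (some 3)) = (((p + r)/2 - c.im : ℝ) : ℂ) := by
      rw [hval]
      simp only [ent_some_eq, entv, Matrix.cons_val_zero, Matrix.cons_val_one, Matrix.head_cons]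
      push_cast
      linear_combination ((Complex.I)/2) * hsc + ((c.im : ℂ)) * Complex.I_sq
    rw [this, Complex.ofReal_re]
  · have : Qd j (Function.update σ i₀ (some 4)) = ((p : ℝ) : ℂ) := by
      rw [hval]
      simp only [ent_some_eq, entv, Matrix.cons_val_zero, Matrix.cons_val_one, Matrix.head_cons]
      ring
    rw [this, Complex.ofReal_re]
  · have : Qd j (Function.update σ i₀ (some 5)) = ((r : ℝ) : ℂ) := by
      rw [hval]
      simp only [ent_some_eq, entv, Matrix.cons_val_zero, Matrix.cons_val_one, Matrix.head_cons]
      ring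
    rw [this, Complex.ofReal_re]

lemma step_sum (j : (Fin N → Fin 2) → ℂ) (σ : Fin N → Option (Fin 6)) (i₀ : Fin N) :
    ∑ k : Fin 6, ((Qd j (Function.update σ i₀ (some k))).re)^2
      ≤ 2 * ((Qd j (Function.update σ i₀ none)).re)^2 := by
  obtain ⟨p, r, cre, cim, hp0, hr0, hdet, h6, h0, h1, h2, h3, h4, h5⟩ := qd_vals j σ i₀
  rw [Fin.sum_univ_six, h0, h1, h2, h3, h4, h5, h6]
  nlinarith [hdet, hp0, hr0, sq_nonneg (p - r), sq_nonneg (p + r)]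

lemma step_mono (j : (Fin N → Fin 2) → ℂ) (σ : Fin N → Option (Fin 6)) (i₀ : Fin N) (k : Fin 6) :
    (Qd j (Function.update σ i₀ (some k))).re ≤ (Qd j (Function.update σ i₀ none)).re := by
  obtain ⟨p, r, cre, cim, hp0, hr0, hdet, h6, h0, h1, h2, h3, h4, h5⟩ := qd_vals j σ i₀
  rw [h6]
  fin_cases k
  · exact le_of_eq_of_le h0 (by nlinarith [hdet, sq_nonneg (cre - (p+r)/2), sq_nonneg (p - r), sq_nonneg cim])
  · exact le_of_eq_of_le h1 (by nlinarith [hdet, sq_nonneg (cre + (p+r)/2), sq_nonneg (p - r), sq_nonneg cim])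
  · exact le_of_eq_of_le h2 (by nlinarith [hdet, sq_nonneg (cim - (p+r)/2), sq_nonneg (p - r), sq_nonneg cre])
  · exact le_of_eq_of_le h3 (by nlinarith [hdet, sq_nonneg (cim + (p+r)/2), sq_nonneg (p - r), sq_nonneg cre])
  · exact le_of_eq_of_le h4 (by linarith)
  · exact le_of_eq_of_le h5 (by linarith)

end perqubit

section mainind
open Finset Complex

variable {N : ℕ}

lemma main_ind (j : (Fin N → Fin 2) → ℂ) (s : Finset (Fin N)) :
    ∀ σ : Fin N → Option (Fin 6), (∀ i, σ i = none ↔ i ∈ s) →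
    ∑ f ∈ Finset.univ.filter (fun f : Fin N → Fin 6 => ∀ i ∉ s, σ i = some (f i)),
        ((Qd j (fun i => some (f i))).re)^2 ≤ 2^s.card * ((Qd j σ).re)^2 := by
  classical
  induction s using Finset.induction_on with
  | empty =>
      intro σ hσ
      have hne : ∀ i, (σ i).isSome := fun i => by
        rcases h : σ i with _ | k
        · exact absurd ((hσ i).mp h) (Finset.notMem_empty i)
        · rfl
      set f₀ : Fin N → Fin 6 := fun i => (σ i).get (hne i) with hf₀
      have hσf : σ = fun i => some (f₀ i) := funext fun i => (Option.some_get (hne i)).symm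
      have hfilter : Finset.univ.filter
          (fun f : Fin N → Fin 6 => ∀ i ∉ (∅ : Finset (Fin N)), σ i = some (f i)) = {f₀} := by
        ext f
        simp only [Finset.mem_filter, Finset.mem_univ, true_and, Finset.mem_singleton,
          Finset.notMem_empty, not_false_iff, forall_true_left]
        constructor
        · intro h
          funext i
          have h1 := h i
          rw [hσf] at h1
          exact (Option.some_injective _ h1).symm
        · intro h i
          rw [h, hσf]
      rw [hfilter, Finset.sum_singleton, Finset.card_empty, pow_zero, one_mul, hσf]
  | @insert i₀ s' hnotin ih =>
      intro σ hσ
      have hσi₀ : σ i₀ = none := (hσ i₀).mpr (Finset.mem_insert_self _ _)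
      have hupdnone : Function.update σ i₀ none = σ := by
        rw [← hσi₀]; exact Function.update_eq_self i₀ σ
      have hsum : ∑ f ∈ Finset.univ.filter
            (fun f : Fin N → Fin 6 => ∀ i ∉ insert i₀ s', σ i = some (f i)),
            ((Qd j (fun i => some (f i))).re)^2
          = ∑ k : Fin 6, ∑ f ∈ Finset.univ.filter
              (fun f : Fin N → Fin 6 => ∀ i ∉ s', Function.update σ i₀ (some k) i = some (f i)),
              ((Qd j (fun i => some (f i))).re)^2 := by
        rw [← Finset.sum_fiberwise (Finset.univ.filter
            (fun f : Fin N → Fin 6 => ∀ i ∉ insert i₀ s', σ i = some (f i)))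
            (fun f => f i₀) (fun f => ((Qd j (fun i => some (f i))).re)^2)]
        refine Finset.sum_congr rfl fun k _ => ?_
        refine Finset.sum_congr ?_ fun _ _ => rfl
        rw [Finset.filter_filter]
        ext f
        simp only [Finset.mem_filter, Finset.mem_univ, true_and]
        constructor
        · rintro ⟨hf, hfk⟩ i hi
          by_cases hii : i = i₀
          · subst hii; rw [Function.update_self, hfk]
          · rw [Function.update_of_ne hii]
            exact hf i (by simp [hii, hi])
        · intro h
          constructor
          · intro i hi
            have hii : i ≠ i₀ := fun he => (he ▸ hi) (Finset.mem_insert_self _ _)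
            have hi' : i ∉ s' := fun hm => hi (Finset.mem_insert_of_mem hm)
            have := h i hi'
            rwa [Function.update_of_ne hii] at this
          · have := h i₀ hnotin
            rw [Function.update_self] at this
            exact (Option.some_injective _ this).symm
      rw [hsum]
      calc ∑ k : Fin 6, ∑ f ∈ Finset.univ.filter
              (fun f : Fin N → Fin 6 => ∀ i ∉ s', Function.update σ i₀ (some k) i = some (f i)),
              ((Qd j (fun i => some (f i))).re)^2
          ≤ ∑ k : Fin 6, 2^s'.card * ((Qd j (Function.update σ i₀ (some k))).re)^2 := by
            refine Finset.sum_le_sum fun k _ => ih (Function.update σ i₀ (some k)) fun i => ?_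
            by_cases hii : i = i₀
            · subst hii
              simp only [Function.update_self]
              constructor
              · intro h; exact absurd h (by simp)
              · intro h; exact absurd h hnotin
            · rw [Function.update_of_ne hii, hσ i, Finset.mem_insert]
              simp [hii]
        _ = 2^s'.card * ∑ k : Fin 6, ((Qd j (Function.update σ i₀ (some k))).re)^2 := by
            rw [Finset.mul_sum]
        _ ≤ 2^s'.card * (2 * ((Qd j (Function.update σ i₀ none)).re)^2) := by
            refine mul_le_mul_of_nonneg_left (step_sum j σ i₀) ?_
            positivity
        _ = 2^(insert i₀ s').card * ((Qd j σ).re)^2 := by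
            rw [Finset.card_insert_of_notMem hnotin, hupdnone]
            ring

lemma qd_le_one (j : (Fin N → Fin 2) → ℂ) (hj : (Qd j (fun _ => none)).re = 1) :
    ∀ (t : Finset (Fin N)) (σ : Fin N → Option (Fin 6)),
      (∀ i ∉ t, σ i = none) → (Qd j σ).re ≤ 1 := by
  classical
  intro t
  induction t using Finset.induction_on with
  | empty =>
      intro σ hσ
      have : σ = fun _ => none := funext fun i => hσ i (Finset.notMem_empty i)
      rw [this, hj]
  | @insert i₀ t' hnotin ih =>
      intro σ hσ
      rcases h : σ i₀ with _ | k
      · refine ih σ fun i hi => ?_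
        by_cases hii : i = i₀
        · subst hii; exact h
        · exact hσ i (by simp [hii, hi])
      · have hupd : Function.update σ i₀ (some k) = σ := by
          rw [← h]; exact Function.update_eq_self i₀ σ
        have h1 : (Qd j σ).re ≤ (Qd j (Function.update σ i₀ none)).re := by
          calc (Qd j σ).re = (Qd j (Function.update σ i₀ (some k))).re := by rw [hupd]
            _ ≤ (Qd j (Function.update σ i₀ none)).re := step_mono j σ i₀ k
        refine h1.trans (ih (Function.update σ i₀ none) fun i hi => ?_)
        by_cases hii : i = i₀
        · subst hii; exact Function.update_self _ _ _
        · rw [Function.update_of_ne hii]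
          exact hσ i (by simp [hii, hi])

end mainind

section final
open Finset Complex

variable {N : ℕ}

lemma qd_none (j : (Fin N → Fin 2) → ℂ) : Qd j (fun _ => none) = star j ⬝ᵥ j := by
  unfold Qd
  have hprod : ∀ x y : Fin N → Fin 2,
      (∏ i, ent none (x i) (y i)) = if x = y then (1:ℂ) else 0 := by
    intro x y
    by_cases h : x = y
    · subst h; simp [ent]
    · rw [if_neg h]
      obtain ⟨i, hi⟩ := Function.ne_iff.mp h
      exact Finset.prod_eq_zero (Finset.mem_univ i) (by simp [ent, hi])
  simp only [hprod]
  rw [dotProduct]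
  refine Finset.sum_congr rfl fun x _ => ?_
  rw [Finset.sum_eq_single x]
  · rw [if_pos rfl, mul_one, starRingEnd_apply]
    rfl
  · intro y _ hy
    rw [if_neg (Ne.symm hy), mul_zero, zero_mul]
  · intro h; exact absurd (Finset.mem_univ x) h

lemma qd_pure (j : (Fin N → Fin 2) → ℂ) (f : Fin N → Fin 6) :
    Qd j (fun i => some (f i)) = ((Complex.normSq (star j ⬝ᵥ prodState f) : ℝ) : ℂ) := by
  have hsplit : ∀ x y : Fin N → Fin 2,
      (∏ i, ent (some (f i)) (x i) (y i)) = prodState f x * conj (prodState f y) := by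
    intro x y
    simp only [ent, prodState]
    rw [Finset.prod_mul_distrib, map_prod]
  have hdot : star j ⬝ᵥ prodState f = ∑ x, conj (j x) * prodState f x := by
    rw [dotProduct]
    exact Finset.sum_congr rfl fun x _ => by
      rw [show (star j) x = conj (j x) from (starRingEnd_apply (j x)).symm ▸ rfl]
  rw [← Complex.mul_conj (star j ⬝ᵥ prodState f)]
  unfold Qd
  simp only [hsplit]
  rw [hdot, map_sum, Finset.sum_mul_sum]
  refine Finset.sum_congr rfl fun x _ => Finset.sum_congr rfl fun y _ => ?_
  rw [map_mul, Complex.conj_conj]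
  ring

/-- For `ρ ∈ S^+` and every unit vector `|j⟩ ∈ (ℂ²)^{⊗N}`,
`Σ_{|ψ⟩∈S_ρ} |⟨j|ψ⟩|⁴ ≤ 2^{n(ρ)} ⟨j| (|φ⟩_A⟨φ|_A ⊗ I_Ā) |j⟩`. -/
theorem sum_quartic_overlap_le (N : ℕ) (g : Fin N → Fin 7)
    (j : (Fin N → Fin 2) → ℂ) (hj : star j ⬝ᵥ j = 1) :
    ∑ f ∈ Srho g, ‖star j ⬝ᵥ prodState f‖ ^ 4
      ≤ 2 ^ nMix g * (star j ⬝ᵥ (pureProjA g).mulVec j).re := by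
  classical
  have h67 : ((6 : Fin 7) : ℕ) = 6 := rfl
  set σg : Fin N → Option (Fin 6) :=
    fun i => if h : (g i : ℕ) < 6 then some ⟨g i, h⟩ else none with hσg
  set s : Finset (Fin N) := Finset.univ.filter (fun i => g i = 6) with hs
  have hglt : ∀ i, g i ≠ 6 ↔ (g i : ℕ) < 6 := by
    intro i
    have h7 := (g i).isLt
    constructor
    · intro h
      have : (g i : ℕ) ≠ 6 := fun hv => h (Fin.ext (by rw [hv, h67]))
      omega
    · intro h hv
      rw [hv, h67] at h
      omega
  have hg6 : ∀ i, σg i = none ↔ i ∈ s := by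
    intro i
    by_cases h : (g i : ℕ) < 6
    · have : g i ≠ 6 := (hglt i).mpr h
      simp [hσg, h, hs, this]
    · have h6 : g i = 6 := by
        by_contra hc
        exact h ((hglt i).mp hc)
      constructor
      · intro _
        simp [hs, h6]
      · intro _
        simp only [hσg]
        exact dif_neg h
  have hcard : s.card = nMix g := rfl
  have hSrho : Srho g = Finset.univ.filter
      (fun f : Fin N → Fin 6 => ∀ i ∉ s, σg i = some (f i)) := by
    unfold Srho
    ext f
    simp only [Finset.mem_filter, Finset.mem_univ, true_and]
    constructor
    · intro h i hi
      have hgi : g i ≠ 6 := by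
        intro he
        exact hi (by simp [hs, he])
      have hlt : (g i : ℕ) < 6 := (hglt i).mp hgi
      have hval := h i hgi
      simp only [hσg, dif_pos hlt]
      exact congrArg some (Fin.ext hval)
    · intro h i hgi
      have hlt : (g i : ℕ) < 6 := (hglt i).mp hgi
      have hi : i ∉ s := by simp [hs, hgi]
      have := h i hi
      simp only [hσg, dif_pos hlt, Option.some_inj] at this
      exact congrArg Fin.val this ▸ rfl
  have hterm : ∀ f : Fin N → Fin 6,
      ‖star j ⬝ᵥ prodState f‖ ^ 4 = ((Qd j (fun i => some (f i))).re)^2 := by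
    intro f
    rw [qd_pure, Complex.ofReal_re, Complex.normSq_eq_norm_sq]
    ring
  have hent : ∀ (i : Fin N) (a b : Fin 2),
      (if g i = 6 then (if a = b then (1:ℂ) else 0) else qsDM (g i) a b)
        = ent (σg i) a b := by
    intro i a b
    by_cases h : (g i : ℕ) < 6
    · have h6 : g i ≠ 6 := (hglt i).mpr h
      rw [if_neg h6, qsDM, dif_pos h]
      simp only [hσg, dif_pos h, ent, Matrix.of_apply]
    · have h6 : g i = 6 := by
        by_contra hc
        exact h ((hglt i).mp hc)
      rw [if_pos h6]
      simp only [hσg, dif_neg h, ent]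
  have hQσ : Qd j σg = star j ⬝ᵥ (pureProjA g).mulVec j := by
    unfold Qd
    rw [dotProduct]
    refine Finset.sum_congr rfl fun x _ => ?_
    have hmv : (pureProjA g).mulVec j x = ∑ y, pureProjA g x y * j y := by
      rw [Matrix.mulVec, dotProduct]
    rw [hmv, Finset.mul_sum]
    refine Finset.sum_congr rfl fun y _ => ?_
    have hP : pureProjA g x y = ∏ i, ent (σg i) (x i) (y i) := by
      rw [pureProjA, Matrix.of_apply]
      exact Finset.prod_congr rfl fun i _ => hent i (x i) (y i)
    rw [hP]
    simp only [Pi.star_apply, starRingEnd_apply]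
    ring
  have hQ1 : (Qd j (fun _ => none)).re = 1 := by
    rw [qd_none, hj, Complex.one_re]
  have hle1 : (Qd j σg).re ≤ 1 := by
    refine qd_le_one j hQ1 (Finset.univ.filter (fun i => ¬ g i = 6)) σg fun i hi => ?_
    have h6 : g i = 6 := by
      by_contra hc
      exact hi (by simp [hc])
    refine (hg6 i).mpr ?_
    simp [hs, h6]
  have h0 : 0 ≤ (Qd j σg).re := by
    obtain ⟨t0, ht0, he⟩ := Qd_real j σg
    rw [he, Complex.ofReal_re]
    exact ht0
  calc ∑ f ∈ Srho g, ‖star j ⬝ᵥ prodState f‖ ^ 4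
      = ∑ f ∈ Finset.univ.filter
          (fun f : Fin N → Fin 6 => ∀ i ∉ s, σg i = some (f i)),
          ((Qd j (fun i => some (f i))).re)^2 := by
        rw [hSrho]
        exact Finset.sum_congr rfl fun f _ => hterm f
    _ ≤ 2^s.card * ((Qd j σg).re)^2 := main_ind j s σg hg6
    _ ≤ 2^s.card * ((Qd j σg).re) := by
        have hx : ((Qd j σg).re)^2 ≤ (Qd j σg).re := by nlinarith [hle1, h0]
        have h2 : (0:ℝ) ≤ 2^s.card := by positivity
        exact mul_le_mul_of_nonneg_left hx h2
    _ = 2 ^ nMix g * (star j ⬝ᵥ (pureProjA g).mulVec j).re := by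
        rw [hcard, hQσ]

end final
end

section
/- Let p be a probability distribution on S^+, and suppose that for some m ∈ ℕ and ε ∈ [0,1], Σ_{ρ∈S^+ : n(ρ) ≥ m} p(ρ) ≥ 1 − ε. Let 𝓔 be the distribution on S obtained by first sampling ρ ∈ S^+ with probability p(ρ) and then sampling |ψ⟩ uniformly from S_ρ. Then for any orthonormal basis {|j⟩}_{j=1}^{2^N} of (ℂ²)^{⊗N}, E_{|ψ⟩∼𝓔} Σ_{j=1}^{2^N} |⟨j|ψ⟩|⁴ ≤ ε + (2/3)^m, i.e., E_{|ψ⟩∼𝓔} 1/D^eff_ψ ≤ ε + (2/3)^m. -/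
open scoped Matrix ComplexConjugate

open Finset

lemma sq2 : ((Real.sqrt 2 : ℝ) : ℂ)⁻¹ * ((Real.sqrt 2 : ℝ) : ℂ)⁻¹ = (2:ℂ)⁻¹ := by
  rw [← mul_inv]
  have h : (Real.sqrt 2 : ℝ) * Real.sqrt 2 = 2 := Real.mul_self_sqrt (by norm_num)
  rw [← Complex.ofReal_mul, h]
  norm_num

lemma L1 (k : Fin 6) : ∑ x : Fin 2, qs k x * conj (qs k x) = 1 := by
  fin_cases k <;>
    simp [qs, Fin.sum_univ_two, Complex.conj_ofReal, Complex.conj_I, mul_comm, mul_assoc,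
      mul_left_comm, sq2] <;>
    ring_nf <;>
    simp [Complex.I_sq, sq2, mul_comm, mul_assoc, mul_left_comm] <;> ring_nf

lemma sq2'' : (((Real.sqrt 2 : ℝ) : ℂ)) ^ 4 = 4 := by
  have h : (Real.sqrt 2 : ℝ) * Real.sqrt 2 = 2 := Real.mul_self_sqrt (by norm_num)
  have : (((Real.sqrt 2 : ℝ) : ℂ)) ^ 4 = ((Real.sqrt 2 * Real.sqrt 2 : ℝ) : ℂ) * ((Real.sqrt 2 * Real.sqrt 2 : ℝ) : ℂ) := by
    push_cast; ring
  rw [this, h]; norm_num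

lemma sq2' : ((((Real.sqrt 2 : ℝ) : ℂ)) ^ 4)⁻¹ * 4 = 1 := by rw [sq2'']; norm_num

lemma L2 (x y x' y' : Fin 2) :
    ∑ k : Fin 6, qs k x * conj (qs k y) * (qs k x' * conj (qs k y')) =
      (if x = y then 1 else 0) * (if x' = y' then 1 else 0) +
      (if x = y' then 1 else 0) * (if x' = y then 1 else 0) := by
  fin_cases x <;> fin_cases y <;> fin_cases x' <;> fin_cases y' <;>
    simp [qs, Fin.sum_univ_six, Complex.conj_ofReal, Complex.conj_I, map_mul, map_inv₀] <;>
    ring_nf <;>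
    simp [Complex.I_sq, sq2, mul_comm, mul_assoc, mul_left_comm] <;> ring_nf <;>
    simp [sq2']


lemma fin7_lt (c : Fin 7) : (c : ℕ) < 6 ↔ c ≠ 6 := by
  constructor
  · intro h he; subst he; have : ((6:Fin 7) : ℕ) = 6 := rfl; omega
  · intro h
    have := c.isLt
    have : (c : ℕ) ≠ 6 := fun hc => h (Fin.ext hc)
    omega

noncomputable def aM {N : ℕ} (g : Fin N → Fin 7) (i : Fin N) (x y : Fin 2) : ℂ :=
  if h : (g i : ℕ) < 6 then qs ⟨g i, h⟩ x * conj (qs ⟨g i, h⟩ y) else if x = y then 1 else 0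

variable {N : ℕ} {g : Fin N → Fin 7}

lemma aM_conj (i : Fin N) (x y : Fin 2) : conj (aM g i x y) = aM g i y x := by
  unfold aM
  split
  · rw [map_mul, Complex.conj_conj]; ring
  · split
    · next hxy => simp [hxy]
    · next hxy => rw [if_neg (fun h => hxy h.symm)]; simp

lemma aM_of_six (i : Fin N) (h : g i = 6) (x y : Fin 2) :
    aM g i x y = if x = y then 1 else 0 := by
  unfold aM
  rw [dif_neg (by rw [fin7_lt]; simp [h])]

lemma aM_mul (i : Fin N) (x y : Fin 2) : ∑ z, aM g i x z * aM g i z y = aM g i x y := by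
  unfold aM
  split
  · have := L1 ⟨g i, by assumption⟩
    rw [Fin.sum_univ_two] at this ⊢
    set q := qs ⟨g i, by assumption⟩
    have e : ∀ z : Fin 2, q x * conj (q z) * (q z * conj (q y))
        = (q z * conj (q z)) * (q x * conj (q y)) := by intro z; ring
    rw [e 0, e 1, ← add_mul, this, one_mul]
  · fin_cases x <;> fin_cases y <;> simp [Fin.sum_univ_two]

lemma aM_trace (i : Fin N) : ∑ x, aM g i x x = if g i = 6 then 2 else 1 := by
  unfold aM
  by_cases h : (g i : ℕ) < 6
  · rw [if_neg (fun hc => by rw [fin7_lt] at h; exact h hc)]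
    simp only [dif_pos h]
    exact L1 ⟨g i, h⟩
  · rw [if_pos (by rwa [fin7_lt, not_not] at h)]
    simp only [dif_neg h]
    simp [Fin.sum_univ_two]

noncomputable def Am {N : ℕ} (g : Fin N → Fin 7) (x y : Fin N → Fin 2) : ℂ :=
  ∏ i, aM g i (x i) (y i)

noncomputable def uv {N : ℕ} (g : Fin N → Fin 7) (w : (Fin N → Fin 2) → ℂ)
    (x : Fin N → Fin 2) : ℂ := ∑ y, Am g x y * w y

lemma Am_conj (x y : Fin N → Fin 2) : conj (Am g x y) = Am g y x := by
  unfold Am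
  rw [map_prod]
  exact Finset.prod_congr rfl fun i _ => aM_conj i (x i) (y i)

lemma sum_prod_eval {N : ℕ} (F : (i : Fin N) → Fin 2 → ℂ) :
    (∑ y : Fin N → Fin 2, ∏ i, F i (y i)) = ∏ i, ∑ v, F i v := by
  rw [Finset.prod_univ_sum]; simp [Fintype.piFinset_univ]

lemma Am_mul (x z : Fin N → Fin 2) : ∑ y, Am g x y * Am g y z = Am g x z := by
  unfold Am
  have h1 : ∀ y : Fin N → Fin 2, (∏ i, aM g i (x i) (y i)) * ∏ i, aM g i (y i) (z i)
      = ∏ i, (aM g i (x i) (y i) * aM g i (y i) (z i)) := by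
    intro y; rw [Finset.prod_mul_distrib]
  simp_rw [h1]
  rw [sum_prod_eval (fun i v => aM g i (x i) v * aM g i v (z i))]
  exact Finset.prod_congr rfl fun i _ => aM_mul i (x i) (z i)

lemma Am_uv (w : (Fin N → Fin 2) → ℂ) (x : Fin N → Fin 2) :
    ∑ y, Am g x y * uv g w y = uv g w x := by
  unfold uv
  simp_rw [Finset.mul_sum]
  rw [Finset.sum_comm]
  refine Finset.sum_congr rfl fun z _ => ?_
  simp_rw [← mul_assoc]
  rw [← Finset.sum_mul, Am_mul]

lemma uv_conj (w : (Fin N → Fin 2) → ℂ) (x : Fin N → Fin 2) :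
    conj (uv g w x) = ∑ y, Am g y x * conj (w y) := by
  unfold uv
  rw [map_sum]
  exact Finset.sum_congr rfl fun y _ => by rw [map_mul, Am_conj]

/-- `Σ_x |u x|² = ⟨w, u⟩` for `u = A w`. -/
lemma uv_normSq (w : (Fin N → Fin 2) → ℂ) :
    ∑ x, conj (uv g w x) * uv g w x = ∑ x, conj (w x) * uv g w x := by
  simp_rw [uv_conj, Finset.sum_mul]
  rw [Finset.sum_comm]
  refine Finset.sum_congr rfl fun y _ => ?_
  have : ∀ x, Am g y x * conj (w y) * uv g w x = conj (w y) * (Am g y x * uv g w x) := by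
    intro x; ring
  simp_rw [this, ← Finset.mul_sum, Am_uv]

/-- trace of `A` is `2 ^ nMix g`. -/
lemma Am_trace : ∑ x, Am g x x = (2 : ℂ) ^ nMix g := by
  unfold Am
  rw [sum_prod_eval (fun i v => aM g i v v)]
  have : ∀ i : Fin N, (∑ v, aM g i v v) = if g i = 6 then (2:ℂ) else 1 :=
    fun i => aM_trace i
  simp_rw [this]
  rw [Finset.prod_ite, Finset.prod_const, Finset.prod_const, one_pow, mul_one, nMix]

/-- contraction lemma: pairing a mixed kernel against `u = A w` gives `u` at the mix. -/
lemma contract (T : Finset (Fin N)) (c d : Fin N → Fin 2)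
    (w : (Fin N → Fin 2) → ℂ) :
    ∑ y, ((∏ i ∈ T, (if c i = y i then (1:ℂ) else 0)) *
        ∏ i ∈ Finset.univ \ T, aM g i (d i) (y i)) * uv g w y
      = uv g w (fun i => if i ∈ T then c i else d i) := by
  unfold uv
  simp_rw [Finset.mul_sum]
  rw [Finset.sum_comm]
  refine Finset.sum_congr rfl fun z _ => ?_
  have h1 : ∀ y : Fin N → Fin 2,
      ((∏ i ∈ T, (if c i = y i then (1:ℂ) else 0)) *
        ∏ i ∈ Finset.univ \ T, aM g i (d i) (y i)) * (Am g y z * w z)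
      = (∏ i, ((if i ∈ T then (if c i = y i then (1:ℂ) else 0) else aM g i (d i) (y i)) *
          aM g i (y i) (z i))) * w z := by
    intro y
    rw [Finset.prod_mul_distrib]
    have h2 : (∏ i, (if i ∈ T then (if c i = y i then (1:ℂ) else 0) else aM g i (d i) (y i)))
        = (∏ i ∈ T, (if c i = y i then (1:ℂ) else 0)) *
          ∏ i ∈ Finset.univ \ T, aM g i (d i) (y i) := by
      rw [← Finset.prod_sdiff (Finset.subset_univ T), mul_comm]
      congr 1
      · exact Finset.prod_congr rfl fun i hi => if_pos hi
      · exact Finset.prod_congr rfl fun i hi => if_neg (Finset.mem_sdiff.mp hi).2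
    rw [h2, Am]
    ring
  simp_rw [h1]
  rw [← Finset.sum_mul]
  congr 1
  rw [sum_prod_eval (fun i v => (if i ∈ T then (if c i = v then (1:ℂ) else 0)
    else aM g i (d i) v) * aM g i v (z i))]
  unfold Am
  refine Finset.prod_congr rfl fun i _ => ?_
  by_cases hi : i ∈ T
  · simp only [hi, if_true]
    simp [ite_mul]
  · simp only [hi, if_false]
    exact aM_mul i (d i) (z i)

/-- `Srho g` as a `piFinset`. -/
lemma Srho_eq_piFinset :
    Srho g = Fintype.piFinset (fun i =>
      if h : (g i : ℕ) < 6 then ({⟨g i, h⟩} : Finset (Fin 6)) else Finset.univ) := by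
  ext f
  simp only [Srho, Finset.mem_filter, Finset.mem_univ, true_and, Fintype.mem_piFinset]
  constructor
  · intro hf i
    by_cases h : (g i : ℕ) < 6
    · rw [dif_pos h, Finset.mem_singleton]
      have := hf i (by rw [← fin7_lt]; omega)
      exact Fin.ext this.symm
    · rw [dif_neg h]; exact Finset.mem_univ _
  · intro hf i hi
    rw [← fin7_lt] at hi
    have := hf i
    rw [dif_pos hi, Finset.mem_singleton] at this
    rw [this]
  -- done

/-- absorbing `A`: for `f ∈ Srho g`, `A ψ_f = ψ_f`. -/
lemma Am_prodState {f : Fin N → Fin 6} (hf : f ∈ Srho g) (y : Fin N → Fin 2) :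
    ∑ x, Am g y x * prodState f x = prodState f y := by
  unfold Am prodState
  simp_rw [← Finset.prod_mul_distrib]
  rw [sum_prod_eval (fun i v => aM g i (y i) v * qs (f i) v)]
  refine Finset.prod_congr rfl fun i _ => ?_
  unfold aM
  by_cases h : (g i : ℕ) < 6
  · simp only [dif_pos h]
    have hfi : f i = ⟨g i, h⟩ := by
      simp only [Srho, Finset.mem_filter] at hf
      exact Fin.ext (hf.2 i (by rw [← fin7_lt]; omega)).symm
    rw [hfi]
    set q := qs (⟨g i, h⟩ : Fin 6)
    have : ∀ v, q (y i) * conj (q v) * q v = (q v * conj (q v)) * q (y i) := by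
      intro v; ring
    simp_rw [this]
    rw [← Finset.sum_mul, L1, one_mul]
  · simp only [dif_neg h]
    simp [ite_mul]

/-- replacing `b j` by `u j = A (b j)` in the overlap. -/
lemma overlap_eq {f : Fin N → Fin 6} (hf : f ∈ Srho g) (w : (Fin N → Fin 2) → ℂ) :
    ∑ x, conj (w x) * prodState f x = ∑ x, conj (uv g w x) * prodState f x := by
  symm
  simp_rw [uv_conj, Finset.sum_mul]
  rw [Finset.sum_comm]
  refine Finset.sum_congr rfl fun y _ => ?_
  have : ∀ x, Am g y x * conj (w y) * prodState f x
      = conj (w y) * (Am g y x * prodState f x) := by intro x; ring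
  simp_rw [this, ← Finset.mul_sum, Am_prodState hf]

/-- the 2-design / averaging identity over `Srho`. -/
lemma design (x y x' y' : Fin N → Fin 2) :
    ∑ f ∈ Srho g, ∏ i, (qs (f i) (x i) * conj (qs (f i) (y i)) *
        (qs (f i) (x' i) * conj (qs (f i) (y' i))))
      = ∏ i, ((aM g i (x i) (y i) * aM g i (x' i) (y' i)) +
          (if g i = 6 then (if x i = y' i then (1:ℂ) else 0) *
            (if x' i = y i then 1 else 0) else 0)) := by
  rw [Srho_eq_piFinset]
  rw [← Finset.prod_univ_sum (t := fun i => if h : (g i : ℕ) < 6 then ({⟨g i, h⟩} : Finset (Fin 6)) else Finset.univ)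
    (f := fun i k => qs k (x i) * conj (qs k (y i)) * (qs k (x' i) * conj (qs k (y' i))))]
  refine Finset.prod_congr rfl fun i _ => ?_
  by_cases h : (g i : ℕ) < 6
  · rw [dif_pos h, Finset.sum_singleton]
    rw [if_neg (fun hc => by rw [fin7_lt] at h; exact h hc)]
    unfold aM
    simp only [dif_pos h, add_zero]
  · rw [dif_neg h, if_pos (by rwa [fin7_lt, not_not] at h)]
    rw [L2]
    have h6 : g i = 6 := by rwa [fin7_lt, not_not] at h
    rw [aM_of_six i h6, aM_of_six i h6]

lemma key_s7 {V W : Type*} [Fintype V] [Fintype W] (F : V × W → ℂ) :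
    ‖∑ p : V × W, ∑ q : V × W,
        conj (F p) * conj (F q) * (F (q.1, p.2) * F (p.1, q.2))‖
      ≤ (∑ p : V × W, ‖F p‖ ^ 2) ^ 2 := by
  classical
  set R : V → V → ℂ := fun v v' => ∑ w, conj (F (v, w)) * F (v', w) with hR
  have h1 : ∑ p : V × W, ∑ q : V × W,
      conj (F p) * conj (F q) * (F (q.1, p.2) * F (p.1, q.2))
      = ∑ v : V, ∑ v' : V, R v v' * R v' v := by
    rw [Fintype.sum_prod_type]
    refine Finset.sum_congr rfl fun v _ => ?_
    simp only [Fintype.sum_prod_type]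
    rw [Finset.sum_comm]
    refine Finset.sum_congr rfl fun v' _ => ?_
    rw [hR, Finset.sum_mul_sum]
    refine Finset.sum_congr rfl fun w _ => ?_
    refine Finset.sum_congr rfl fun w' _ => ?_
    ring
  have h2 : ∀ v v', R v' v = conj (R v v') := by
    intro v v'
    rw [hR, map_sum]
    refine Finset.sum_congr rfl fun w _ => ?_
    rw [map_mul, Complex.conj_conj]
    ring
  have h3 : ∀ v v', R v v' * R v' v = ((‖R v v'‖ : ℝ) : ℂ) ^ 2 := by
    intro v v'
    rw [h2 v v', Complex.mul_conj]
    push_cast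
    norm_cast
    rw [Complex.normSq_eq_norm_sq]
  have h4 : ∀ v v', ‖R v v'‖ ^ 2 ≤ (∑ w, ‖F (v, w)‖ ^ 2) * (∑ w, ‖F (v', w)‖ ^ 2) := by
    intro v v'
    have hn : ‖R v v'‖ ≤ ∑ w, ‖F (v, w)‖ * ‖F (v', w)‖ := by
      rw [hR]
      refine (norm_sum_le _ _).trans ?_
      refine Finset.sum_le_sum fun w _ => ?_
      rw [norm_mul, RCLike.norm_conj]
    calc ‖R v v'‖ ^ 2 ≤ (∑ w, ‖F (v, w)‖ * ‖F (v', w)‖) ^ 2 := by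
          refine pow_le_pow_left₀ (norm_nonneg _) hn 2
      _ ≤ (∑ w, ‖F (v, w)‖ ^ 2) * (∑ w, ‖F (v', w)‖ ^ 2) :=
          Finset.sum_mul_sq_le_sq_mul_sq _ _ _
  calc ‖∑ p : V × W, ∑ q : V × W,
        conj (F p) * conj (F q) * (F (q.1, p.2) * F (p.1, q.2))‖
      = ‖((∑ v : V, ∑ v' : V, (‖R v v'‖ ^ 2 : ℝ) : ℝ) : ℂ)‖ := by
        rw [h1]
        congr 1
        push_cast
        exact Finset.sum_congr rfl fun v _ => Finset.sum_congr rfl fun v' _ => h3 v v'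
    _ = |∑ v : V, ∑ v' : V, (‖R v v'‖ ^ 2 : ℝ)| := by rw [Complex.norm_real, Real.norm_eq_abs]
    _ = ∑ v : V, ∑ v' : V, (‖R v v'‖ ^ 2 : ℝ) := by
        rw [abs_of_nonneg]
        exact Finset.sum_nonneg fun v _ => Finset.sum_nonneg fun v' _ => sq_nonneg _
    _ ≤ ∑ v : V, ∑ v' : V, (∑ w, ‖F (v, w)‖ ^ 2) * (∑ w, ‖F (v', w)‖ ^ 2) :=
        Finset.sum_le_sum fun v _ => Finset.sum_le_sum fun v' _ => h4 v v'
    _ = (∑ p : V × W, ‖F p‖ ^ 2) ^ 2 := by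
        rw [Fintype.sum_prod_type, sq, Finset.sum_mul_sum]


/-- mix of two assignments along `T`. -/
def mT {N : ℕ} (T : Finset (Fin N)) (a b : Fin N → Fin 2) : Fin N → Fin 2 :=
  fun i => if i ∈ T then b i else a i

lemma WT_bound (T : Finset (Fin N)) (u : (Fin N → Fin 2) → ℂ) :
    ‖∑ x : Fin N → Fin 2, ∑ x' : Fin N → Fin 2,
        conj (u x) * conj (u x') * (u (mT T x' x) * u (mT T x x'))‖
      ≤ (∑ x, ‖u x‖ ^ 2) ^ 2 := by
  classical
  set e := Equiv.piEquivPiSubtypeProd (fun i : Fin N => i ∈ T) (fun _ => Fin 2) with he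
  set F : (({i : Fin N // i ∈ T} → Fin 2) × ({i : Fin N // ¬ i ∈ T} → Fin 2)) → ℂ :=
    fun p => u (e.symm p) with hF
  have hmix : ∀ p q, mT T (e.symm p) (e.symm q) = e.symm (q.1, p.2) := by
    intro p q
    funext i
    simp only [mT, he, Equiv.piEquivPiSubtypeProd_symm_apply]
    by_cases hi : i ∈ T
    · rw [if_pos hi, dif_pos hi, dif_pos hi]
    · rw [if_neg hi, dif_neg hi, dif_neg hi]
  have h1 : ∑ x : Fin N → Fin 2, ∑ x' : Fin N → Fin 2,
      conj (u x) * conj (u x') * (u (mT T x' x) * u (mT T x x'))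
      = ∑ p, ∑ q, conj (F p) * conj (F q) * (F (q.1, p.2) * F (p.1, q.2)) := by
    rw [← Equiv.sum_comp e.symm]
    refine Finset.sum_congr rfl fun p _ => ?_
    rw [← Equiv.sum_comp e.symm]
    refine Finset.sum_congr rfl fun q _ => ?_
    rw [hF]
    simp only []
    rw [hmix q p, hmix p q]
    ring
  have h2 : (∑ x, ‖u x‖ ^ 2) = ∑ p, ‖F p‖ ^ 2 := by
    rw [← Equiv.sum_comp e.symm (fun x => ‖u x‖ ^ 2)]
  rw [h1, h2]
  exact key_s7 F

lemma W1 (T : Finset (Fin N)) (w : (Fin N → Fin 2) → ℂ) :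
    (∑ x : Fin N → Fin 2, ∑ x' : Fin N → Fin 2, ∑ y : Fin N → Fin 2, ∑ y' : Fin N → Fin 2,
      (conj (uv g w x) * uv g w y * (conj (uv g w x') * uv g w y')) *
      ((∏ i ∈ T, ((if x i = y' i then (1:ℂ) else 0) * (if x' i = y i then 1 else 0))) *
        ∏ i ∈ Finset.univ \ T, (aM g i (x i) (y i) * aM g i (x' i) (y' i))))
    = ∑ x : Fin N → Fin 2, ∑ x' : Fin N → Fin 2,
        conj (uv g w x) * conj (uv g w x') *
          (uv g w (mT T x' x) * uv g w (mT T x x')) := by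
  refine Finset.sum_congr rfl fun x _ => ?_
  refine Finset.sum_congr rfl fun x' _ => ?_
  unfold mT
  have hR : conj (uv g w x) * conj (uv g w x') *
        (uv g w (fun i => if i ∈ T then x i else x' i) *
          uv g w (fun i => if i ∈ T then x' i else x i))
      = ∑ y' : Fin N → Fin 2, ∑ y : Fin N → Fin 2,
          (conj (uv g w x) * conj (uv g w x')) *
          ((((∏ i ∈ T, (if x i = y' i then (1:ℂ) else 0)) *
              ∏ i ∈ Finset.univ \ T, aM g i (x' i) (y' i)) * uv g w y') *
           ((((∏ i ∈ T, (if x' i = y i then (1:ℂ) else 0)) *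
              ∏ i ∈ Finset.univ \ T, aM g i (x i) (y i))) * uv g w y)) := by
    rw [← contract T x x' w, ← contract T x' x w, Finset.sum_mul_sum, Finset.mul_sum]
    refine Finset.sum_congr rfl fun y' _ => ?_
    rw [Finset.mul_sum]
  rw [hR, Finset.sum_comm]
  refine Finset.sum_congr rfl fun y _ => Finset.sum_congr rfl fun y' _ => ?_
  rw [Finset.prod_mul_distrib, Finset.prod_mul_distrib]
  ring

lemma pull5 {A B C D E : Type*} [Fintype B] [Fintype C] [Fintype D] [Fintype E]
    (s : Finset A) (H : A → B → C → D → E → ℂ) :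
    (∑ a ∈ s, ∑ b, ∑ c, ∑ d, ∑ e, H a b c d e)
      = ∑ b, ∑ c, ∑ d, ∑ e, ∑ a ∈ s, H a b c d e := by
  rw [Finset.sum_comm]
  refine Finset.sum_congr rfl fun b _ => ?_
  rw [Finset.sum_comm]
  refine Finset.sum_congr rfl fun c _ => ?_
  rw [Finset.sum_comm]
  refine Finset.sum_congr rfl fun d _ => ?_
  rw [Finset.sum_comm]

/-- the central per-`j` expansion. -/
lemma Zj (w : (Fin N → Fin 2) → ℂ) :
    ∑ f ∈ Srho g, ((∑ x, conj (uv g w x) * prodState f x) *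
        conj (∑ x, conj (uv g w x) * prodState f x)) ^ 2
      = ∑ T ∈ (Finset.univ : Finset (Fin N)).powerset,
          (if ∀ i ∈ T, g i = 6 then
            ∑ x : Fin N → Fin 2, ∑ x' : Fin N → Fin 2,
              conj (uv g w x) * conj (uv g w x') *
                (uv g w (mT T x' x) * uv g w (mT T x x'))
          else 0) := by
  classical
  set u := uv g w with hu
  have hcz : ∀ f : Fin N → Fin 6, conj (∑ x, conj (u x) * prodState f x)
      = ∑ y, u y * conj (prodState f y) := by
    intro f
    rw [map_sum]
    exact Finset.sum_congr rfl fun y _ => by rw [map_mul, Complex.conj_conj]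
  have hexp : ∀ f : Fin N → Fin 6,
      ((∑ x, conj (u x) * prodState f x) * conj (∑ x, conj (u x) * prodState f x)) ^ 2
      = ∑ x : Fin N → Fin 2, ∑ x' : Fin N → Fin 2, ∑ y : Fin N → Fin 2, ∑ y' : Fin N → Fin 2,
          (conj (u x) * u y * (conj (u x') * u y')) *
          ∏ i, (qs (f i) (x i) * conj (qs (f i) (y i)) *
            (qs (f i) (x' i) * conj (qs (f i) (y' i)))) := by
    intro f
    have hψ : ∀ x y x' y' : Fin N → Fin 2,
        prodState f x * conj (prodState f y) * (prodState f x' * conj (prodState f y'))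
        = ∏ i, (qs (f i) (x i) * conj (qs (f i) (y i)) *
            (qs (f i) (x' i) * conj (qs (f i) (y' i)))) := by
      intro x y x' y'
      unfold prodState
      rw [map_prod, map_prod, ← Finset.prod_mul_distrib, ← Finset.prod_mul_distrib,
        ← Finset.prod_mul_distrib]
    rw [hcz f, Finset.sum_mul_sum, sq, Finset.sum_mul_sum]
    refine Finset.sum_congr rfl fun x _ => Finset.sum_congr rfl fun x' _ => ?_
    rw [Finset.sum_mul_sum]
    refine Finset.sum_congr rfl fun y _ => Finset.sum_congr rfl fun y' _ => ?_
    rw [← hψ x y x' y']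
    ring
  have prodE : ∀ (T : Finset (Fin N)) (x y x' y' : Fin N → Fin 2),
      (∏ i ∈ T, (if g i = 6 then (if x i = y' i then (1:ℂ) else 0) *
          (if x' i = y i then 1 else 0) else 0))
      = if ∀ i ∈ T, g i = 6 then
          ∏ i ∈ T, ((if x i = y' i then (1:ℂ) else 0) * (if x' i = y i then 1 else 0))
        else 0 := by
    intro T x y x' y'
    by_cases hT : ∀ i ∈ T, g i = 6
    · rw [if_pos hT]
      exact Finset.prod_congr rfl fun i hi => if_pos (hT i hi)
    · rw [if_neg hT]
      push_neg at hT
      obtain ⟨i0, hi0, hgi0⟩ := hT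
      exact Finset.prod_eq_zero hi0 (if_neg hgi0)
  calc ∑ f ∈ Srho g, ((∑ x, conj (u x) * prodState f x) *
        conj (∑ x, conj (u x) * prodState f x)) ^ 2
      = ∑ f ∈ Srho g, ∑ x : Fin N → Fin 2, ∑ x' : Fin N → Fin 2, ∑ y : Fin N → Fin 2,
          ∑ y' : Fin N → Fin 2,
          (conj (u x) * u y * (conj (u x') * u y')) *
          ∏ i, (qs (f i) (x i) * conj (qs (f i) (y i)) *
            (qs (f i) (x' i) * conj (qs (f i) (y' i)))) :=
        Finset.sum_congr rfl fun f _ => hexp f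
    _ = ∑ x : Fin N → Fin 2, ∑ x' : Fin N → Fin 2, ∑ y : Fin N → Fin 2,
          ∑ y' : Fin N → Fin 2, ∑ f ∈ Srho g,
          (conj (u x) * u y * (conj (u x') * u y')) *
          ∏ i, (qs (f i) (x i) * conj (qs (f i) (y i)) *
            (qs (f i) (x' i) * conj (qs (f i) (y' i)))) := pull5 _ _
    _ = ∑ x : Fin N → Fin 2, ∑ x' : Fin N → Fin 2, ∑ y : Fin N → Fin 2,
          ∑ y' : Fin N → Fin 2, ∑ T ∈ (Finset.univ : Finset (Fin N)).powerset,
          (conj (u x) * u y * (conj (u x') * u y')) *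
          ((if ∀ i ∈ T, g i = 6 then
            ∏ i ∈ T, ((if x i = y' i then (1:ℂ) else 0) * (if x' i = y i then 1 else 0))
          else 0) *
            ∏ i ∈ Finset.univ \ T, (aM g i (x i) (y i) * aM g i (x' i) (y' i))) := by
        refine Finset.sum_congr rfl fun x _ => Finset.sum_congr rfl fun x' _ =>
          Finset.sum_congr rfl fun y _ => Finset.sum_congr rfl fun y' _ => ?_
        rw [← Finset.mul_sum, ← Finset.mul_sum]
        congr 1
        rw [design x y x' y']
        have flip : (∏ i, ((aM g i (x i) (y i) * aM g i (x' i) (y' i)) +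
            (if g i = 6 then (if x i = y' i then (1:ℂ) else 0) *
              (if x' i = y i then 1 else 0) else 0)))
            = ∏ i, ((if g i = 6 then (if x i = y' i then (1:ℂ) else 0) *
              (if x' i = y i then 1 else 0) else 0) +
              (aM g i (x i) (y i) * aM g i (x' i) (y' i))) :=
          Finset.prod_congr rfl fun i _ => add_comm _ _
        rw [flip, Finset.prod_add]
        exact Finset.sum_congr rfl fun T _ => by rw [prodE]
    _ = ∑ T ∈ (Finset.univ : Finset (Fin N)).powerset,
          ∑ x : Fin N → Fin 2, ∑ x' : Fin N → Fin 2, ∑ y : Fin N → Fin 2,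
          ∑ y' : Fin N → Fin 2,
          (conj (u x) * u y * (conj (u x') * u y')) *
          ((if ∀ i ∈ T, g i = 6 then
            ∏ i ∈ T, ((if x i = y' i then (1:ℂ) else 0) * (if x' i = y i then 1 else 0))
          else 0) *
            ∏ i ∈ Finset.univ \ T, (aM g i (x i) (y i) * aM g i (x' i) (y' i))) :=
        (pull5 _ _).symm
    _ = ∑ T ∈ (Finset.univ : Finset (Fin N)).powerset,
          (if ∀ i ∈ T, g i = 6 then
            ∑ x : Fin N → Fin 2, ∑ x' : Fin N → Fin 2,
              conj (u x) * conj (u x') * (u (mT T x' x) * u (mT T x x'))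
          else 0) := by
        refine Finset.sum_congr rfl fun T _ => ?_
        by_cases hT : ∀ i ∈ T, g i = 6
        · simp only [if_pos hT]
          rw [← W1 T w]
        · simp only [if_neg hT, zero_mul, mul_zero, Finset.sum_const_zero]



lemma complete (b : (Fin N → Fin 2) → ((Fin N → Fin 2) → ℂ))
    (hb : ∀ j k, star (b j) ⬝ᵥ b k = if j = k then 1 else 0) (x y : Fin N → Fin 2) :
    (∑ j : Fin N → Fin 2, conj (b j x) * b j y) = if x = y then 1 else 0 := by
  classical
  set B : Matrix (Fin N → Fin 2) (Fin N → Fin 2) ℂ :=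
    Matrix.of (fun j x => conj (b j x)) with hBdef
  have hB : B * Bᴴ = 1 := by
    ext j k
    rw [Matrix.mul_apply]
    have : ∀ x, B j x * Bᴴ x k = conj (b j x) * b k x := by
      intro x
      rw [Matrix.conjTranspose_apply, hBdef]
      simp [Matrix.of_apply, Complex.conj_conj]
    simp_rw [this]
    have := hb j k
    rw [dotProduct] at this
    simp only [Pi.star_apply] at this
    rw [show (∑ x, conj (b j x) * b k x) = ∑ x, star (b j x) * b k x from rfl, this]
    by_cases h : j = k <;> simp [h, Matrix.one_apply]
  have hB2 : Bᴴ * B = 1 := mul_eq_one_comm.mp hB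
  have hent : (Bᴴ * B) y x = (1 : Matrix (Fin N → Fin 2) (Fin N → Fin 2) ℂ) y x := by
    rw [hB2]
  rw [Matrix.mul_apply] at hent
  have h3 : ∀ j, Bᴴ y j * B j x = conj (b j x) * b j y := by
    intro j
    rw [Matrix.conjTranspose_apply, hBdef]
    simp [Matrix.of_apply, Complex.conj_conj]
    ring
  simp_rw [h3] at hent
  rw [hent, Matrix.one_apply]
  by_cases h : x = y <;> simp [h]
  · exact fun hc => h hc.symm

lemma dot_eq (b : (Fin N → Fin 2) → ((Fin N → Fin 2) → ℂ)) (j : Fin N → Fin 2)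
    (v : (Fin N → Fin 2) → ℂ) :
    star (b j) ⬝ᵥ v = ∑ x, conj (b j x) * v x := rfl

lemma main_g (g : Fin N → Fin 7) (b : (Fin N → Fin 2) → ((Fin N → Fin 2) → ℂ))
    (hb : ∀ j k, star (b j) ⬝ᵥ b k = if j = k then 1 else 0) :
    ∑ f ∈ Srho g, ∑ j : Fin N → Fin 2, ‖star (b j) ⬝ᵥ prodState f‖ ^ 4
      ≤ 4 ^ nMix g := by
  classical
  set u : (Fin N → Fin 2) → (Fin N → Fin 2) → ℂ := fun j => uv g (b j) with hudef
  set s : (Fin N → Fin 2) → ℝ := fun j => ∑ x, ‖u j x‖ ^ 2 with hsdef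
  have hs0 : ∀ j, 0 ≤ s j := fun j => Finset.sum_nonneg fun x _ => sq_nonneg _
  -- s j as a complex inner product with b j
  have hsC : ∀ j, ((s j : ℝ) : ℂ) = ∑ x, conj (b j x) * u j x := by
    intro j
    rw [← uv_normSq (b j)]
    rw [hsdef]
    push_cast
    refine Finset.sum_congr rfl fun x _ => ?_
    conv_rhs => rw [mul_comm]
    rw [Complex.mul_conj]
    norm_cast
    rw [← Complex.sq_norm]
  have hbnorm : ∀ j, (∑ x, ‖b j x‖ ^ 2) = 1 := by
    intro j
    have h1 := hb j j
    rw [if_pos rfl, dot_eq] at h1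
    have h2 : ((∑ x, ‖b j x‖ ^ 2 : ℝ) : ℂ) = 1 := by
      rw [← h1]
      push_cast
      refine Finset.sum_congr rfl fun x _ => ?_
      conv_rhs => rw [mul_comm]
      rw [Complex.mul_conj]
      norm_cast
      rw [← Complex.sq_norm]
    exact_mod_cast h2
  have sle1 : ∀ j, s j ≤ 1 := by
    intro j
    have hcs : s j ≤ ∑ x, ‖b j x‖ * ‖u j x‖ := by
      calc s j = ‖((s j : ℝ) : ℂ)‖ := by
            rw [Complex.norm_real, Real.norm_eq_abs, abs_of_nonneg (hs0 j)]
        _ = ‖∑ x, conj (b j x) * u j x‖ := by rw [hsC j]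
        _ ≤ ∑ x, ‖conj (b j x) * u j x‖ := norm_sum_le _ _
        _ = ∑ x, ‖b j x‖ * ‖u j x‖ := by
            refine Finset.sum_congr rfl fun x _ => ?_
            rw [norm_mul, RCLike.norm_conj]
    have hsq : (∑ x, ‖b j x‖ * ‖u j x‖) ^ 2 ≤ (∑ x, ‖b j x‖ ^ 2) * (∑ x, ‖u j x‖ ^ 2) :=
      Finset.sum_mul_sq_le_sq_mul_sq _ _ _
    rw [hbnorm j, one_mul] at hsq
    have hsu : (∑ x, ‖u j x‖ ^ 2) = s j := rfl
    rw [hsu] at hsq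
    nlinarith [hs0 j, hcs, hsq]
  have ssum : (∑ j, s j) = 2 ^ nMix g := by
    have hC : ((∑ j, s j : ℝ) : ℂ) = (2 : ℂ) ^ nMix g := by
      push_cast
      calc ∑ j, ((s j : ℝ) : ℂ) = ∑ j, ∑ x, conj (b j x) * u j x :=
            Finset.sum_congr rfl fun j _ => hsC j
        _ = ∑ j, ∑ x, ∑ y, Am g x y * (conj (b j x) * b j y) := by
            refine Finset.sum_congr rfl fun j _ => Finset.sum_congr rfl fun x _ => ?_
            rw [hudef]
            simp only [uv]
            rw [Finset.mul_sum]
            exact Finset.sum_congr rfl fun y _ => by ring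
        _ = ∑ x, ∑ y, Am g x y * (∑ j, conj (b j x) * b j y) := by
            rw [Finset.sum_comm]
            refine Finset.sum_congr rfl fun x _ => ?_
            rw [Finset.sum_comm]
            refine Finset.sum_congr rfl fun y _ => ?_
            rw [Finset.mul_sum]
        _ = ∑ x, Am g x x := by
            refine Finset.sum_congr rfl fun x _ => ?_
            have : ∀ y : Fin N → Fin 2, Am g x y * (∑ j, conj (b j x) * b j y)
                = if x = y then Am g x y else 0 := by
              intro y
              rw [complete b hb x y]
              split <;> simp
            simp_rw [this]
            rw [Finset.sum_ite_eq univ x (fun y => Am g x y)]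
            simp
        _ = 2 ^ nMix g := Am_trace
    exact_mod_cast hC
  have hfilter : ((Finset.univ : Finset (Fin N)).powerset.filter
        fun T => ∀ i ∈ T, g i = 6)
      = (Finset.univ.filter fun i => g i = 6).powerset := by
    ext T
    simp [Finset.subset_iff]
  have perj : ∀ j, (∑ f ∈ Srho g, ‖star (b j) ⬝ᵥ prodState f‖ ^ 4)
      ≤ (2 : ℝ) ^ nMix g * s j ^ 2 := by
    intro j
    have hover : ∀ f ∈ Srho g, star (b j) ⬝ᵥ prodState f
        = ∑ x, conj (uv g (b j) x) * prodState f x := by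
      intro f hf
      rw [dot_eq]
      exact overlap_eq hf (b j)
    have hC : (∑ f ∈ Srho g, ((∑ x, conj (uv g (b j) x) * prodState f x) *
          conj (∑ x, conj (uv g (b j) x) * prodState f x)) ^ 2)
        = ((∑ f ∈ Srho g, ‖star (b j) ⬝ᵥ prodState f‖ ^ 4 : ℝ) : ℂ) := by
      push_cast
      refine Finset.sum_congr rfl fun f hf => ?_
      rw [← hover f hf, Complex.mul_conj]
      norm_cast
      rw [Complex.normSq_eq_norm_sq]
      ring
    have hre : (∑ f ∈ Srho g, ‖star (b j) ⬝ᵥ prodState f‖ ^ 4)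
        = (∑ f ∈ Srho g, ((∑ x, conj (uv g (b j) x) * prodState f x) *
          conj (∑ x, conj (uv g (b j) x) * prodState f x)) ^ 2).re := by
      rw [hC, Complex.ofReal_re]
    rw [hre, Zj (b j)]
    calc (∑ T ∈ (Finset.univ : Finset (Fin N)).powerset,
          (if ∀ i ∈ T, g i = 6 then
            ∑ x : Fin N → Fin 2, ∑ x' : Fin N → Fin 2,
              conj (uv g (b j) x) * conj (uv g (b j) x') *
                (uv g (b j) (mT T x' x) * uv g (b j) (mT T x x'))
          else 0)).re
        ≤ ‖∑ T ∈ (Finset.univ : Finset (Fin N)).powerset,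
          (if ∀ i ∈ T, g i = 6 then
            ∑ x : Fin N → Fin 2, ∑ x' : Fin N → Fin 2,
              conj (uv g (b j) x) * conj (uv g (b j) x') *
                (uv g (b j) (mT T x' x) * uv g (b j) (mT T x x'))
          else 0)‖ := Complex.re_le_norm _
      _ ≤ ∑ T ∈ (Finset.univ : Finset (Fin N)).powerset,
          ‖(if ∀ i ∈ T, g i = 6 then
            ∑ x : Fin N → Fin 2, ∑ x' : Fin N → Fin 2,
              conj (uv g (b j) x) * conj (uv g (b j) x') *
                (uv g (b j) (mT T x' x) * uv g (b j) (mT T x x'))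
          else 0)‖ := norm_sum_le _ _
      _ ≤ ∑ T ∈ (Finset.univ : Finset (Fin N)).powerset,
          (if ∀ i ∈ T, g i = 6 then s j ^ 2 else 0) := by
          refine Finset.sum_le_sum fun T _ => ?_
          by_cases hT : ∀ i ∈ T, g i = 6
          · rw [if_pos hT, if_pos hT]
            exact WT_bound T (uv g (b j))
          · rw [if_neg hT, if_neg hT, norm_zero]
      _ = (2 : ℝ) ^ nMix g * s j ^ 2 := by
          rw [← Finset.sum_filter, hfilter, Finset.sum_const, Finset.card_powerset]
          rw [nMix]
          simp [mul_comm]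
  calc ∑ f ∈ Srho g, ∑ j : Fin N → Fin 2, ‖star (b j) ⬝ᵥ prodState f‖ ^ 4
      = ∑ j : Fin N → Fin 2, ∑ f ∈ Srho g, ‖star (b j) ⬝ᵥ prodState f‖ ^ 4 :=
        Finset.sum_comm
    _ ≤ ∑ j : Fin N → Fin 2, (2 : ℝ) ^ nMix g * s j ^ 2 :=
        Finset.sum_le_sum fun j _ => perj j
    _ ≤ ∑ j : Fin N → Fin 2, (2 : ℝ) ^ nMix g * s j := by
        refine Finset.sum_le_sum fun j _ => ?_
        have h1 := sle1 j
        have h2 := hs0 j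
        have h3 : (0:ℝ) ≤ (2:ℝ) ^ nMix g := by positivity
        have h4 : s j ^ 2 ≤ s j := by nlinarith
        exact mul_le_mul_of_nonneg_left h4 h3
    _ = (2 : ℝ) ^ nMix g * ∑ j, s j := by rw [Finset.mul_sum]
    _ = 4 ^ nMix g := by
        rw [ssum, ← mul_pow]
        norm_num




/-- Let `p` be a probability distribution on `S^+` with `Σ_{ρ : n(ρ) ≥ m} p(ρ) ≥ 1 − ε`,
and let `𝓔` be the distribution on `S` obtained by sampling `ρ ∼ p` and then sampling
`|ψ⟩` uniformly from `S_ρ` (recall `|S_ρ| = 6^{n(ρ)}`). Then for any orthonormal basis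
`{|j⟩}` of `(ℂ²)^{⊗N}`, `E_{|ψ⟩∼𝓔} Σ_j |⟨j|ψ⟩|⁴ ≤ ε + (2/3)^m`. -/
theorem expected_inverse_effective_dimension_le (N : ℕ)
    (p : (Fin N → Fin 7) → ℝ) (hp0 : ∀ g, 0 ≤ p g) (hp1 : ∑ g, p g = 1)
    (m : ℕ) (ε : ℝ) (hε : ε ∈ Set.Icc (0 : ℝ) 1)
    (hm : 1 - ε ≤ ∑ g ∈ Finset.univ.filter fun g : Fin N → Fin 7 => m ≤ nMix g, p g)
    (b : (Fin N → Fin 2) → ((Fin N → Fin 2) → ℂ))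
    (hb : ∀ j k, star (b j) ⬝ᵥ b k = if j = k then 1 else 0) :
    ∑ g : Fin N → Fin 7, p g * (((6 : ℝ) ^ nMix g)⁻¹ *
        ∑ f ∈ Srho g, ∑ j : Fin N → Fin 2, ‖star (b j) ⬝ᵥ prodState f‖ ^ 4)
      ≤ ε + (2 / 3 : ℝ) ^ m := by
  classical
  set Q : (Fin N → Fin 7) → ℝ := fun g => ((6 : ℝ) ^ nMix g)⁻¹ *
      ∑ f ∈ Srho g, ∑ j : Fin N → Fin 2, ‖star (b j) ⬝ᵥ prodState f‖ ^ 4 with hQdef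
  have hQle : ∀ g, Q g ≤ (2 / 3 : ℝ) ^ nMix g := by
    intro g
    have h := main_g g b hb
    have h1 : Q g ≤ ((6 : ℝ) ^ nMix g)⁻¹ * 4 ^ nMix g := by
      rw [hQdef]
      exact mul_le_mul_of_nonneg_left h (by positivity)
    have h2 : ((6 : ℝ) ^ nMix g)⁻¹ * 4 ^ nMix g = (2 / 3 : ℝ) ^ nMix g := by
      rw [show (2 / 3 : ℝ) = 4 / 6 by norm_num, div_pow, div_eq_mul_inv, mul_comm]
    exact h1.trans_eq h2
  have h23m : (0 : ℝ) ≤ (2 / 3 : ℝ) ^ m := by positivity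
  have h23m1 : (2 / 3 : ℝ) ^ m ≤ 1 := pow_le_one₀ (by norm_num) (by norm_num)
  have hQ1 : ∀ g, Q g ≤ 1 := fun g =>
    (hQle g).trans (pow_le_one₀ (by norm_num) (by norm_num))
  have hsplit := Finset.sum_filter_add_sum_filter_not Finset.univ
    (fun g : Fin N → Fin 7 => m ≤ nMix g) (fun g => p g * Q g)
  have hPsum := Finset.sum_filter_add_sum_filter_not Finset.univ
    (fun g : Fin N → Fin 7 => m ≤ nMix g) p
  rw [hp1] at hPsum
  have hA : ∑ g ∈ Finset.univ.filter (fun g : Fin N → Fin 7 => m ≤ nMix g), p g * Q g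
      ≤ (∑ g ∈ Finset.univ.filter (fun g : Fin N → Fin 7 => m ≤ nMix g), p g) *
        (2 / 3 : ℝ) ^ m := by
    rw [Finset.sum_mul]
    refine Finset.sum_le_sum fun g hg => ?_
    have hgm : m ≤ nMix g := (Finset.mem_filter.mp hg).2
    have : Q g ≤ (2 / 3 : ℝ) ^ m :=
      (hQle g).trans (pow_le_pow_of_le_one (by norm_num) (by norm_num) hgm)
    exact mul_le_mul_of_nonneg_left this (hp0 g)
  have hB : ∑ g ∈ Finset.univ.filter (fun g : Fin N → Fin 7 => ¬ m ≤ nMix g), p g * Q g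
      ≤ ∑ g ∈ Finset.univ.filter (fun g : Fin N → Fin 7 => ¬ m ≤ nMix g), p g := by
    refine Finset.sum_le_sum fun g _ => ?_
    calc p g * Q g ≤ p g * 1 := mul_le_mul_of_nonneg_left (hQ1 g) (hp0 g)
      _ = p g := mul_one _
  have hS1 : 1 - ε ≤ ∑ g ∈ Finset.univ.filter (fun g : Fin N → Fin 7 => m ≤ nMix g), p g := hm
  have hS1le : (∑ g ∈ Finset.univ.filter (fun g : Fin N → Fin 7 => m ≤ nMix g), p g) ≤ 1 := by
    have h0 : (0:ℝ) ≤ ∑ g ∈ Finset.univ.filter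
        (fun g : Fin N → Fin 7 => ¬ m ≤ nMix g), p g :=
      Finset.sum_nonneg fun g _ => hp0 g
    linarith [hPsum]
  have hε0 := hε.1
  have hε1 := hε.2
  calc ∑ g : Fin N → Fin 7, p g * Q g
      = (∑ g ∈ Finset.univ.filter (fun g : Fin N → Fin 7 => m ≤ nMix g), p g * Q g) +
        ∑ g ∈ Finset.univ.filter (fun g : Fin N → Fin 7 => ¬ m ≤ nMix g), p g * Q g :=
        hsplit.symm
    _ ≤ (∑ g ∈ Finset.univ.filter (fun g : Fin N → Fin 7 => m ≤ nMix g), p g) *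
          (2 / 3 : ℝ) ^ m +
        ∑ g ∈ Finset.univ.filter (fun g : Fin N → Fin 7 => ¬ m ≤ nMix g), p g :=
        add_le_add hA hB
    _ ≤ ε + (2 / 3 : ℝ) ^ m := by nlinarith [hPsum, hS1, hS1le, h23m, h23m1, hε0, hε1]
end
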